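/- arXiv:1205.3816 — 3 statements merged into one kernel-verified Lean document; each statement's English description precedes it below -/
import Mathlib

section
/- Let G be a factorizable finite simple graph and X ⊆ V(G) a nonempty set. Then the following are equivalent: (i) X is separating, i.e., for every factor-component H of G, either V(H) ⊆ X or V(H) ∩ X = ∅; (ii) there exist factor-components H1, …, Hk of G (k ≥ 1) such that X is the disjoint union V(H1) ∪ ⋯ ∪ V(Hk); (iii) for every perfect matching M of G, no edge of M joins a vertex of X to a vertex of V(G) ∖ X; (iv) for every perfect matching M of G, M ∩ E(G[X]) is a perfect matching of the induced subgraph G[X]. -/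
open SimpleGraph

variable {V : Type*}

/-- A set of edges is pairwise vertex-disjoint. -/
def DisjointEdges (N : Set (Sym2 V)) : Prop :=
  ∀ e ∈ N, ∀ f ∈ N, e ≠ f → ∀ x : V, x ∈ e → x ∉ f

/-- `M` is a matching of `G`: a set of pairwise vertex-disjoint edges of `G`. -/
def IsMatchingSet (G : SimpleGraph V) (M : Set (Sym2 V)) : Prop :=
  M ⊆ G.edgeSet ∧ DisjointEdges M

/-- `M` is a perfect matching of `G`: a matching covering every vertex. -/
def IsPerfectMatchingSet (G : SimpleGraph V) (M : Set (Sym2 V)) : Prop :=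
  IsMatchingSet G M ∧ ∀ v : V, ∃ e ∈ M, v ∈ e

/-- `M` is a near-perfect matching of `G` whose unique exposed vertex is `v`. -/
def IsNearPerfectMatchingSet (G : SimpleGraph V) (M : Set (Sym2 V)) (v : V) : Prop :=
  IsMatchingSet G M ∧ (∀ e ∈ M, v ∉ e) ∧ ∀ u : V, u ≠ v → ∃ e ∈ M, u ∈ e

/-- The induced subgraph `G[X]` has a perfect matching. -/
def HasPMOn (G : SimpleGraph V) (X : Set V) : Prop :=
  ∃ M : Set (Sym2 V), IsMatchingSet G M ∧ (∀ e ∈ M, ∀ x : V, x ∈ e → x ∈ X) ∧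
    ∀ v ∈ X, ∃ e ∈ M, v ∈ e

/-- `G` is factorizable: it has a perfect matching. -/
def Factorizable (G : SimpleGraph V) : Prop :=
  ∃ M : Set (Sym2 V), IsPerfectMatchingSet G M

/-- `G` is factor-critical: deleting any single vertex leaves a factorizable graph. -/
def FactorCritical (G : SimpleGraph V) : Prop :=
  ∀ v : V, HasPMOn G {v}ᶜ

/-- A walk is `M`-alternating: its edges outside `M` are pairwise vertex-disjoint. -/
def MAlternating (M : Set (Sym2 V)) {G : SimpleGraph V} {u v : V} (p : G.Walk u v) : Prop :=
  ∀ e ∈ p.edges, ∀ f ∈ p.edges, e ∉ M → f ∉ M → e ≠ f → ∀ x : V, x ∈ e → x ∉ f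

/-- An `M`-saturated path: a path with an odd number of edges such that `M ∩ E(P)`
is a perfect matching of `P`. -/
def IsSaturatedPath (M : Set (Sym2 V)) {G : SimpleGraph V} {u v : V} (p : G.Walk u v) : Prop :=
  p.IsPath ∧ Odd p.length ∧ ∀ x ∈ p.support, ∃ e ∈ p.edges, e ∈ M ∧ x ∈ e

/-- An `M`-exposed path: a path with an odd number of edges such that `E(P) \ M`
is a perfect matching of `P`. -/
def IsExposedPath (M : Set (Sym2 V)) {G : SimpleGraph V} {u v : V} (p : G.Walk u v) : Prop :=
  p.IsPath ∧ Odd p.length ∧ ∀ x ∈ p.support, ∃ e ∈ p.edges, e ∉ M ∧ x ∈ e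

/-- An `M`-balanced path from `u` to `v`: an `M`-alternating path with an even number
of edges whose first edge (the one incident with `u`) belongs to `M`; a trivial
one-vertex path is `M`-balanced. -/
def IsBalancedPath (M : Set (Sym2 V)) {G : SimpleGraph V} {u v : V} (p : G.Walk u v) : Prop :=
  p.IsPath ∧ Even p.length ∧ MAlternating M p ∧ ∀ e ∈ p.edges.head?, e ∈ M

/-- An edge of `G` is allowed if it lies in some perfect matching of `G`. -/
def Allowed (G : SimpleGraph V) (e : Sym2 V) : Prop :=
  ∃ M : Set (Sym2 V), IsPerfectMatchingSet G M ∧ e ∈ M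

/-- The spanning subgraph of `G` formed by its allowed edges. -/
def allowedSubgraph (G : SimpleGraph V) : SimpleGraph V where
  Adj u v := G.Adj u v ∧ Allowed G s(u, v)
  symm := by
    constructor
    intro u v h
    refine ⟨h.1.symm, ?_⟩
    rw [Sym2.eq_swap]
    exact h.2
  loopless := ⟨fun v h => G.irrefl h.1⟩

/-- `C` is (the vertex set of) a factor-component of `G`: a connected component of the
spanning subgraph of `G` formed by the allowed edges (the factor-component itself being
the induced subgraph `G[C]`). -/
def IsFactorComponent (G : SimpleGraph V) (C : Set V) : Prop :=
  ∃ c : (allowedSubgraph G).ConnectedComponent, C = c.supp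

/-- `G` is elementary: it is factorizable and has exactly one factor-component. -/
def Elementary (G : SimpleGraph V) : Prop :=
  Factorizable G ∧ (allowedSubgraph G).Connected

/-- `X` is a separating set of `G`. -/
def Separating (G : SimpleGraph V) (X : Set V) : Prop :=
  ∀ C : Set V, IsFactorComponent G C → C ⊆ X ∨ Disjoint C X

/-- The contraction `G[X]/S`: the induced subgraph of `G` on `X` with `S` contracted
to a single vertex (the vertex `none`), deleting loops and parallel edges. -/
def contractOn (G : SimpleGraph V) (X S : Set V) : SimpleGraph (Option ↥(X \ S)) where
  Adj a b :=
    match a, b with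
    | some x, some y => G.Adj x.1 y.1
    | some x, none => ∃ s ∈ S, G.Adj x.1 s
    | none, some y => ∃ s ∈ S, G.Adj y.1 s
    | none, none => False
  symm := by
    constructor
    rintro (_ | x) (_ | y) h
    · exact h.elim
    · exact h
    · exact h
    · exact h.symm
  loopless := by
    constructor
    rintro (_ | x) h
    · exact h.elim
    · exact G.irrefl h

/-- `X` is a critical-inducing set for the factor-component (with vertex set) `C1`:
a separating set containing `C1` such that `G[X]/C1` is factor-critical. -/
def CriticalInducing (G : SimpleGraph V) (C1 X : Set V) : Prop :=
  Separating G X ∧ C1 ⊆ X ∧ FactorCritical (contractOn G X C1)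

/-- `C1 ⊵ C2`: there is a critical-inducing set for `C1` to `C2`. -/
def Yield (G : SimpleGraph V) (C1 C2 : Set V) : Prop :=
  ∃ X : Set V, CriticalInducing G C1 X ∧ C2 ⊆ X

/-- `u ∼ v`: `u = v` or `G - u - v` has no perfect matching. -/
def SimRel (G : SimpleGraph V) (u v : V) : Prop :=
  u = v ∨ ¬ HasPMOn G (({u, v} : Set V)ᶜ)

/-- An `M`-ear relative to the vertex set `X`: a path whose two end vertices lie in `X`
and whose internal vertices do not (or a cycle with exactly one vertex in `X`), such
that the ear minus `X` is an `M`-saturated path. -/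
def IsMEar (G : SimpleGraph V) (M : Set (Sym2 V)) (X : Set V) {u v : V}
    (p : G.Walk u v) : Prop :=
  u ∈ X ∧ v ∈ X ∧ ((∃ h : u = v, (p.copy rfl h.symm).IsCycle) ∨ (u ≠ v ∧ p.IsPath)) ∧
  ∃ (x y : V) (hux : G.Adj u x) (q : G.Walk x y) (hyv : G.Adj y v),
    p = SimpleGraph.Walk.cons hux (q.concat hyv) ∧
    IsSaturatedPath M q ∧ ∀ w ∈ q.support, w ∉ X

/-- An `M`-ear relative to `X` through (the factor-component with vertex set) `C`:
some internal vertex of the ear lies in `C`. -/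
def IsMEarThrough (G : SimpleGraph V) (M : Set (Sym2 V)) (X C : Set V) {u v : V}
    (p : G.Walk u v) : Prop :=
  IsMEar G M X p ∧ ∃ w ∈ p.support, w ∉ X ∧ w ∈ C

/-- An `M`-ear sequence `(H 0, …, H k)` of pairwise distinct factor-components,
where for each `i` there is an `M`-ear relative to `H i` through `H (i+1)`. -/
def IsMEarSequence (G : SimpleGraph V) (M : Set (Sym2 V)) (k : ℕ)
    (H : Fin (k + 1) → Set V) : Prop :=
  (∀ i, IsFactorComponent G (H i)) ∧ Function.Injective H ∧
  ∀ i : Fin k, ∃ (u v : V) (p : G.Walk u v),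
    IsMEarThrough G M (H i.castSucc) (H i.succ) p

lemma walk_cross' {V : Type*} {G : SimpleGraph V} {X : Set V} :
    ∀ {u w : V}, G.Walk u w → u ∈ X → w ∉ X → ∃ a b, G.Adj a b ∧ a ∈ X ∧ b ∉ X
  | _, _, .nil, hu, hw => absurd hu hw
  | _, _, .cons (v := v) h p, hu, hw => by
      by_cases hv : v ∈ X
      · exact walk_cross' p hv hw
      · exact ⟨_, v, h, hu, hv⟩

lemma sep_of_iv' {V : Type*} {G : SimpleGraph V} {X : Set V}
    (hiv : ∀ M : Set (Sym2 V), IsPerfectMatchingSet G M →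
        ∀ v ∈ X, ∃ e ∈ M, (∀ x ∈ e, x ∈ X) ∧ v ∈ e) :
    Separating G X := by
  rintro C ⟨c, rfl⟩
  by_contra hcon
  push_neg at hcon
  obtain ⟨hns, hnd⟩ := hcon
  obtain ⟨u, hu, huX⟩ := Set.not_disjoint_iff.1 hnd
  obtain ⟨w, hw, hwX⟩ : ∃ w, w ∈ c.supp ∧ w ∉ X := by
    rcases Set.not_subset.1 hns with ⟨w, hw, hwX⟩
    exact ⟨w, hw, hwX⟩
  have hreach : (allowedSubgraph G).Reachable u w := by
    have hu' := (SimpleGraph.ConnectedComponent.mem_supp_iff _ _).1 hu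
    have hw' := (SimpleGraph.ConnectedComponent.mem_supp_iff _ _).1 hw
    exact SimpleGraph.ConnectedComponent.exact (hu'.trans hw'.symm)
  obtain ⟨p⟩ := hreach
  obtain ⟨a, b, hab, haX, hbX⟩ := walk_cross' p huX hwX
  obtain ⟨M, hM, heM⟩ := hab.2
  obtain ⟨f, hfM, hfX, hafe⟩ := hiv M hM a haX
  have hne : s(a, b) ≠ f := by
    intro h
    exact hbX (hfX b (h ▸ Sym2.mem_mk_right a b))
  exact hM.1.2 s(a, b) heM f hfM hne a (Sym2.mem_mk_left a b) hafe

lemma sep_to_iii' {V : Type*} {G : SimpleGraph V} {X : Set V}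
    (hsep : Separating G X) :
    ∀ M : Set (Sym2 V), IsPerfectMatchingSet G M →
      ∀ e ∈ M, (∀ x ∈ e, x ∈ X) ∨ ∀ x ∈ e, x ∉ X := by
  intro M hM e he
  induction e using Sym2.ind with
  | _ u v =>
    have hadjG : G.Adj u v := (G.mem_edgeSet).1 (hM.1.1 he)
    have hadj : (allowedSubgraph G).Adj u v := ⟨hadjG, M, hM, he⟩
    set c := (allowedSubgraph G).connectedComponentMk u with hc
    have hu : u ∈ c.supp := rfl
    have hv : v ∈ c.supp := by
      have : (allowedSubgraph G).connectedComponentMk v = c :=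
        (SimpleGraph.ConnectedComponent.sound hadj.symm.reachable)
      exact (SimpleGraph.ConnectedComponent.mem_supp_iff _ _).2 this
    rcases hsep c.supp ⟨c, rfl⟩ with hsub | hdisj
    · left
      intro x hx
      rcases Sym2.mem_iff.1 hx with rfl | rfl
      · exact hsub hu
      · exact hsub hv
    · right
      intro x hx hxX
      rcases Sym2.mem_iff.1 hx with rfl | rfl
      · exact Set.disjoint_left.1 hdisj hu hxX
      · exact Set.disjoint_left.1 hdisj hv hxX

lemma sep_to_ii' {V : Type*} [Fintype V] {G : SimpleGraph V} {X : Set V}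
    (hX : X.Nonempty) (hsep : Separating G X) :
    ∃ (k : ℕ) (H : Fin (k + 1) → Set V),
        (∀ i, IsFactorComponent G (H i)) ∧
        (∀ i j, i ≠ j → Disjoint (H i) (H j)) ∧ X = ⋃ i, H i := by
  classical
  have : Finite (allowedSubgraph G).ConnectedComponent := Quot.finite _
  set T : Set (allowedSubgraph G).ConnectedComponent :=
    {c | (c.supp ∩ X).Nonempty} with hT
  have hTfin : T.Finite := Set.toFinite T
  set s := hTfin.toFinset with hs
  have hsne : s.Nonempty := by
    obtain ⟨v, hv⟩ := hX
    refine ⟨(allowedSubgraph G).connectedComponentMk v, ?_⟩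
    rw [hs, Set.Finite.mem_toFinset]
    exact ⟨v, rfl, hv⟩
  have hcard : s.card - 1 + 1 = s.card := Nat.succ_pred_eq_of_pos (Finset.card_pos.2 hsne)
  set e := s.equivFin with he
  refine ⟨s.card - 1, fun i => (e.symm (Fin.cast hcard i)).1.supp, ?_, ?_, ?_⟩
  · intro i
    exact ⟨_, rfl⟩
  · intro i j hij
    have hne : ((e.symm (Fin.cast hcard i)) : (allowedSubgraph G).ConnectedComponent) ≠
        ((e.symm (Fin.cast hcard j)) : (allowedSubgraph G).ConnectedComponent) := by
      intro h
      apply hij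
      have := e.symm.injective (Subtype.ext h)
      exact (Fin.cast_injective hcard) this
    rw [Set.disjoint_left]
    intro x hx hx'
    exact hne (((SimpleGraph.ConnectedComponent.mem_supp_iff _ _).1 hx).symm.trans
      ((SimpleGraph.ConnectedComponent.mem_supp_iff _ _).1 hx'))
  · ext v
    simp only [Set.mem_iUnion]
    constructor
    · intro hv
      set c := (allowedSubgraph G).connectedComponentMk v with hc
      have hcs : c ∈ s := by
        rw [hs, Set.Finite.mem_toFinset]
        exact ⟨v, rfl, hv⟩
      refine ⟨Fin.cast hcard.symm (e ⟨c, hcs⟩), ?_⟩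
      have h1 : e.symm (Fin.cast hcard (Fin.cast hcard.symm (e ⟨c, hcs⟩))) = ⟨c, hcs⟩ := by
        simp
      show v ∈ (e.symm (Fin.cast hcard (Fin.cast hcard.symm (e ⟨c, hcs⟩)))).1.supp
      rw [h1]
      exact rfl
    · rintro ⟨i, hi⟩
      have hmem : ((e.symm (Fin.cast hcard i)) : (allowedSubgraph G).ConnectedComponent) ∈ T :=
        by rw [← Set.Finite.mem_toFinset hTfin]; exact (e.symm (Fin.cast hcard i)).2
      rcases hsep _ ⟨(e.symm (Fin.cast hcard i) : _), rfl⟩ with hsub | hdisj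
      · exact hsub hi
      · exact absurd hmem (by
          rw [hT, Set.mem_setOf_eq, ← Set.not_disjoint_iff_nonempty_inter]
          exact fun h => h hdisj)

lemma ii_to_sep' {V : Type*} {G : SimpleGraph V} {X : Set V}
    (h : ∃ (k : ℕ) (H : Fin (k + 1) → Set V),
        (∀ i, IsFactorComponent G (H i)) ∧
        (∀ i j, i ≠ j → Disjoint (H i) (H j)) ∧ X = ⋃ i, H i) :
    Separating G X := by
  obtain ⟨k, H, hcomp, _, rfl⟩ := h
  rintro C ⟨c, rfl⟩
  by_cases hmeet : Disjoint c.supp (⋃ i, H i)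
  · exact Or.inr hmeet
  · left
    obtain ⟨v, hvc, hvX⟩ := Set.not_disjoint_iff.1 hmeet
    obtain ⟨i, hvi⟩ := Set.mem_iUnion.1 hvX
    obtain ⟨d, hd⟩ := hcomp i
    have hcd : c = d := by
      rw [hd] at hvi
      exact (((SimpleGraph.ConnectedComponent.mem_supp_iff _ _).1 hvc).symm.trans
        ((SimpleGraph.ConnectedComponent.mem_supp_iff _ _).1 hvi))
    intro x hx
    exact Set.mem_iUnion.2 ⟨i, by rw [hd, ← hcd]; exact hx⟩

/-- Let `G` be a factorizable finite simple graph and `X ⊆ V(G)` nonempty.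
TFAE: (i) `X` is separating; (ii) `X` is a disjoint union of (vertex sets of)
factor-components; (iii) for every perfect matching `M`, no edge of `M` joins `X` to its
complement; (iv) for every perfect matching `M`, `M ∩ E(G[X])` is a perfect matching
of `G[X]`. -/
theorem statement_5 {V : Type*} [Fintype V] (G : SimpleGraph V) (hG : Factorizable G)
    (X : Set V) (hX : X.Nonempty) :
    (Separating G X ↔ ∃ (k : ℕ) (H : Fin (k + 1) → Set V),
        (∀ i, IsFactorComponent G (H i)) ∧
        (∀ i j, i ≠ j → Disjoint (H i) (H j)) ∧ X = ⋃ i, H i) ∧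
    (Separating G X ↔ ∀ M : Set (Sym2 V), IsPerfectMatchingSet G M →
        ∀ e ∈ M, (∀ x ∈ e, x ∈ X) ∨ ∀ x ∈ e, x ∉ X) ∧
    (Separating G X ↔ ∀ M : Set (Sym2 V), IsPerfectMatchingSet G M →
        ∀ v ∈ X, ∃ e ∈ M, (∀ x ∈ e, x ∈ X) ∧ v ∈ e) :=  by
  classical
  have hiii_of_sep := @sep_to_iii' V G X
  have hiv_of_iii : (∀ M : Set (Sym2 V), IsPerfectMatchingSet G M →
        ∀ e ∈ M, (∀ x ∈ e, x ∈ X) ∨ ∀ x ∈ e, x ∉ X) →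
      ∀ M : Set (Sym2 V), IsPerfectMatchingSet G M →
        ∀ v ∈ X, ∃ e ∈ M, (∀ x ∈ e, x ∈ X) ∧ v ∈ e := by
    intro h3 M hM v hv
    obtain ⟨e, heM, hve⟩ := hM.2 v
    rcases h3 M hM e heM with hin | hout
    · exact ⟨e, heM, hin, hve⟩
    · exact absurd hv (hout v hve)
  refine ⟨⟨fun hsep => sep_to_ii' hX hsep, ii_to_sep'⟩,
    ⟨fun hsep => hiii_of_sep hsep, fun h3 => sep_of_iv' (hiv_of_iii h3)⟩,
    ⟨fun hsep => hiv_of_iii (hiii_of_sep hsep), sep_of_iv'⟩⟩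
end

section
/- Let G be a factorizable finite simple graph, M a perfect matching of G, X ⊆ V(G) a separating set, and H a factor-component of G with V(H) ∩ X = ∅. Let P be an M-ear relative to X through H, with end vertices u, v ∈ X, and set Y := (V(H) ∪ V(P)) ∖ {u, v}. Then for every x ∈ Y: (i) there exists an internal vertex y of P such that there is an M-balanced path Q from x to y with V(Q) ⊆ Y and V(Q) ∩ V(P) = {y}; and (ii) for one of the end vertices w ∈ {u, v}, the concatenation of Q with the segment of P from y to w is an M-balanced path from x to w all of whose vertices except w lie in Y. -/
open SimpleGraph

variable {V : Type*}

/-! ### Auxiliary development for Statement 8 -/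

namespace S8

open SimpleGraph Walk

variable {V : Type*} {G : SimpleGraph V} {M : Set (Sym2 V)}

theorem matching_eq (hd : DisjointEdges M) {e f : Sym2 V} (he : e ∈ M)
    (hf : f ∈ M) {z : V} (hze : z ∈ e) (hzf : z ∈ f) : e = f := by
  by_contra hne
  exact hd e he f hf hne z hze hzf

noncomputable def partner (hM : IsPerfectMatchingSet G M) (z : V) : V :=
  Sym2.Mem.other (Classical.choose_spec (hM.2 z)).2

theorem partner_mem (hM : IsPerfectMatchingSet G M) (z : V) : s(z, partner hM z) ∈ M := by
  have h1 := (Classical.choose_spec (hM.2 z)).1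
  have h2 := Sym2.other_spec (Classical.choose_spec (hM.2 z)).2
  rw [partner, h2]
  exact h1

theorem eq_partner_edge (hM : IsPerfectMatchingSet G M) {e : Sym2 V} {z : V} (he : e ∈ M)
    (hz : z ∈ e) : e = s(z, partner hM z) :=
  matching_eq hM.1.2 he (partner_mem hM z) hz (Sym2.mem_mk_left z _)

theorem partner_eq (hM : IsPerfectMatchingSet G M) {z w : V} (h : s(z, w) ∈ M) :
    partner hM z = w := by
  have h2 := eq_partner_edge hM h (Sym2.mem_mk_left z w)
  rw [Sym2.eq_iff] at h2
  rcases h2 with ⟨-, rfl⟩ | ⟨h1, rfl⟩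
  · rfl
  · exact h1.symm

theorem partner_adj (hM : IsPerfectMatchingSet G M) (z : V) : G.Adj z (partner hM z) :=
  (G.mem_edgeSet).1 (hM.1.1 (partner_mem hM z))

theorem partner_ne (hM : IsPerfectMatchingSet G M) (z : V) : partner hM z ≠ z :=
  (partner_adj hM z).ne'

theorem partner_invol (hM : IsPerfectMatchingSet G M) (z : V) :
    partner hM (partner hM z) = z :=
  partner_eq hM (by rw [Sym2.eq_swap]; exact partner_mem hM z)

theorem allowed_of_mem_pm (hM : IsPerfectMatchingSet G M) {e : Sym2 V} (he : e ∈ M) :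
    Allowed G e := ⟨M, hM, he⟩

theorem allowedSubgraph_adj {a b : V} :
    (allowedSubgraph G).Adj a b ↔ G.Adj a b ∧ Allowed G s(a, b) := Iff.rfl

/-- Strict alternation of a walk w.r.t. `M`; the flag records whether the first edge
should belong to `M`. -/
def AltB (M : Set (Sym2 V)) {G : SimpleGraph V} : ∀ {a b : V}, G.Walk a b → Bool → Prop
  | _, _, Walk.nil, _ => True
  | _, _, @Walk.cons _ _ a c _ _ q, t => ((s(a, c) ∈ M) ↔ t = true) ∧ AltB M q (!t)

@[simp] theorem altB_nil {a : V} {t : Bool} : AltB M (Walk.nil : G.Walk a a) t := trivial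

theorem altB_cons {a c b : V} (h : G.Adj a c) (q : G.Walk c b) (t : Bool) :
    AltB M (Walk.cons h q) t ↔ ((s(a, c) ∈ M) ↔ t = true) ∧ AltB M q (!t) := Iff.rfl

theorem bool_xor_not (a t : Bool) : Bool.xor a (!t) = Bool.xor (!a) t := by
  cases a <;> cases t <;> rfl

theorem bool_xor_not_not (a t : Bool) : Bool.xor (!a) (!t) = Bool.xor a t := by
  cases a <;> cases t <;> rfl

theorem bool_xor_cancel (a t : Bool) : Bool.xor a (Bool.xor a t) = t := by
  cases a <;> cases t <;> rfl

theorem decide_even (n : ℕ) : decide (Even n) = !decide (Odd n) := by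
  rw [decide_eq_decide.mpr Nat.not_odd_iff_even.symm, decide_not]

theorem decide_odd_succ (n : ℕ) : decide (Odd (n + 1)) = !decide (Odd n) := by
  rw [decide_eq_decide.mpr Nat.odd_add_one, decide_not]

theorem altB_append {a b c : V} (p : G.Walk a b) (q : G.Walk b c) (t : Bool) :
    AltB M (p.append q) t ↔
      AltB M p t ∧ AltB M q (Bool.xor (decide (Odd p.length)) t) := by
  induction p generalizing t with
  | nil =>
    rw [Walk.nil_append]
    simp only [Walk.length_nil]
    have h0 : decide (Odd 0) = false := by simp [Nat.odd_iff]
    simp [altB_nil, Bool.xor, Nat.odd_iff]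
  | cons h p ih =>
    rw [Walk.cons_append, altB_cons, altB_cons, ih q (!t), Walk.length_cons, decide_odd_succ,
      bool_xor_not, and_assoc]

theorem altB_reverse {a b : V} (p : G.Walk a b) {t : Bool} (h : AltB M p t) :
    AltB M p.reverse (Bool.xor (decide (Even p.length)) t) := by
  induction p generalizing t with
  | nil => exact altB_nil
  | cons hadj p ih =>
    obtain ⟨h1, h2⟩ := h
    rw [Walk.reverse_cons, altB_append]
    constructor
    · have h3 := ih h2
      rw [decide_even] at h3
      rw [Walk.length_cons, decide_even, decide_odd_succ, Bool.not_not, bool_xor_not_not] at *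
      exact h3
    · rw [Walk.length_reverse, Walk.length_cons, decide_even, decide_odd_succ, Bool.not_not]
      rw [bool_xor_cancel]
      refine ⟨?_, altB_nil⟩
      rw [Sym2.eq_swap]
      exact h1

theorem altB_head {a b : V} {p : G.Walk a b} (h : AltB M p true) :
    ∀ e ∈ p.edges.head?, e ∈ M := by
  cases p with
  | nil => intro e he; simp [Walk.edges_nil] at he
  | cons hadj q =>
    intro e he
    rw [Walk.edges_cons] at he
    simp only [List.head?_cons, Option.mem_def, Option.some.injEq] at he
    rw [← he]
    exact h.1.mpr rfl

theorem mem_support_of_edge {a b z : V} {p : G.Walk a b} {e : Sym2 V} (he : e ∈ p.edges)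
    (hz : z ∈ e) : z ∈ p.support := by
  induction e using Sym2.ind with
  | _ x y =>
    rcases Sym2.mem_iff.mp hz with rfl | rfl
    · exact Walk.fst_mem_support_of_mem_edges p he
    · exact Walk.snd_mem_support_of_mem_edges p he

theorem eq_first_edge {a c b : V} {h : G.Adj a c} {q : G.Walk c b}
    (hp : (Walk.cons h q).IsPath) {e : Sym2 V} (he : e ∈ (Walk.cons h q).edges)
    (hae : a ∈ e) : e = s(a, c) := by
  rw [Walk.edges_cons] at he
  rcases List.mem_cons.mp he with rfl | he
  · rfl
  · exact absurd (mem_support_of_edge he hae) ((Walk.cons_isPath_iff h q).mp hp).2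

theorem malt_of_altB : ∀ {a b : V} {p : G.Walk a b}, p.IsPath → ∀ {t : Bool},
    AltB M p t → MAlternating M p
  | _, _, Walk.nil, _, _, _ => by intro e he; simp [Walk.edges_nil] at he
  | _, _, @Walk.cons _ _ a c b hadj q, hp, t, h => by
    have h1 : (s(a, c) ∈ M) ↔ t = true := h.1
    have h2 : AltB M q (!t) := h.2
    have hq : q.IsPath := hp.of_cons
    have hane := ((Walk.cons_isPath_iff hadj q).mp hp).2
    have IH : MAlternating M q := malt_of_altB hq h2
    have key : s(a, c) ∉ M → ∀ f ∈ q.edges, f ∉ M → ∀ z : V, z ∈ s(a, c) → z ∉ f := by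
      intro hacM f hf hfM z hze hzf
      rcases Sym2.mem_iff.mp hze with rfl | rfl
      · exact hane (mem_support_of_edge hf hzf)
      · cases q with
        | nil => simp [Walk.edges_nil] at hf
        | cons hadj2 q2 =>
          have hfe := eq_first_edge hq hf hzf
          have ht : t = false := by
            cases t
            · rfl
            · exact absurd (h1.mpr rfl) hacM
          subst ht
          exact hfM (hfe ▸ h2.1.mpr rfl)
    intro e he f hf heM hfM hef z hze hzf
    rw [Walk.edges_cons, List.mem_cons] at he hf
    rcases he with rfl | he
    · rcases hf with rfl | hf
      · exact hef rfl
      · exact key heM f hf hfM z hze hzf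
    · rcases hf with rfl | hf
      · exact key hfM e he heM z hzf hze
      · exact IH e he f hf heM hfM hef z hze hzf

theorem sat_altB (hM : IsPerfectMatchingSet G M) :
    ∀ {a b : V} (q : G.Walk a b), q.IsPath →
      (∀ x ∈ q.support, ∃ e ∈ q.edges, e ∈ M ∧ x ∈ e) → AltB M q true
  | _, _, Walk.nil, _, _ => altB_nil
  | _, _, @Walk.cons _ _ a c _ h Walk.nil, hp, hcov => by
    obtain ⟨e, he, heM, hae⟩ := hcov a (Walk.start_mem_support _)
    have he1 : e = s(a, c) := eq_first_edge hp he hae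
    rw [he1] at heM
    exact ⟨by simp [heM], altB_nil⟩
  | _, _, @Walk.cons _ _ a c b h (@Walk.cons _ _ _ d _ h2 q2), hp, hcov => by
    obtain ⟨e, he, heM, hae⟩ := hcov a (Walk.start_mem_support _)
    have he1 : e = s(a, c) := eq_first_edge hp he hae
    rw [he1] at heM
    have hp2 : (Walk.cons h2 q2).IsPath := hp.of_cons
    have hq2 : q2.IsPath := hp2.of_cons
    have hanot : a ∉ (Walk.cons h2 q2).support := ((Walk.cons_isPath_iff _ _).mp hp).2
    have hcnot : c ∉ q2.support := ((Walk.cons_isPath_iff _ _).mp hp2).2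
    have hne2 : s(c, d) ∉ M := by
      intro hmem
      have hne : s(a, c) ≠ s(c, d) := by
        intro heq
        have hmem2 : a ∈ s(c, d) := heq ▸ Sym2.mem_mk_left a c
        rcases Sym2.mem_iff.mp hmem2 with rfl | rfl
        · exact h.ne rfl
        · exact hanot (by rw [Walk.support_cons]; exact List.mem_cons_of_mem _ (Walk.start_mem_support q2))
      exact hM.1.2 _ heM _ hmem hne c (Sym2.mem_mk_right a c) (Sym2.mem_mk_left c d)
    refine ⟨by simp [heM], by simp [hne2], ?_⟩
    apply sat_altB hM q2 hq2
    intro z hz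
    obtain ⟨e', he', heM', hze'⟩ := hcov z (by
      rw [Walk.support_cons, Walk.support_cons]
      exact List.mem_cons_of_mem _ (List.mem_cons_of_mem _ hz))
    rw [Walk.edges_cons, Walk.edges_cons] at he'
    rcases List.mem_cons.mp he' with rfl | he'
    · exfalso
      rcases Sym2.mem_iff.mp hze' with rfl | rfl
      · exact hanot (by rw [Walk.support_cons]; exact List.mem_cons_of_mem _ hz)
      · exact hcnot hz
    · rcases List.mem_cons.mp he' with rfl | he'
      · exact absurd heM' hne2
      · exact ⟨e', he', heM', hze'⟩

theorem reach_of_walk {H : SimpleGraph V} : ∀ {a b : V} (R : G.Walk a b),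
    (∀ e ∈ R.edges, e ∈ H.edgeSet) → ∀ z ∈ R.support, H.Reachable a z
  | _, _, Walk.nil, _, z, hz => by
    rw [Walk.support_nil, List.mem_singleton] at hz
    subst hz
    exact Reachable.refl _
  | _, _, @Walk.cons _ _ a c b hadj R, hall, z, hz => by
    have hAdj : H.Adj a c := (H.mem_edgeSet).1
      (hall s(a, c) (by rw [Walk.edges_cons]; exact List.mem_cons_self))
    rw [Walk.support_cons, List.mem_cons] at hz
    rcases hz with rfl | hz
    · exact Reachable.refl _
    · exact hAdj.reachable.trans (reach_of_walk R
        (fun e he => hall e (by rw [Walk.edges_cons]; exact List.mem_cons_of_mem _ he)) z hz)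

theorem exists_crossing {H : SimpleGraph V} {K : Set V} : ∀ {a b : V} (R : H.Walk a b),
    a ∉ K → b ∈ K → ∃ c d : V, H.Adj c d ∧ c ∉ K ∧ d ∈ K
  | _, _, Walk.nil, ha, hb => absurd hb ha
  | _, _, @Walk.cons _ _ a c b hadj R, ha, hb => by
    by_cases hc : c ∈ K
    · exact ⟨a, c, hadj, ha, hc⟩
    · exact exists_crossing R hc hb

theorem trunc (hM : IsPerfectMatchingSet G M) {K : Set V}
    (hK : ∀ z ∈ K, ∀ w : V, s(z, w) ∈ M → w ∈ K) :
    ∀ {a z : V} (R : G.Walk a z), R.IsPath → AltB M R true → a ∉ K → z ∈ K →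
      ∃ (y : V) (Q : G.Walk a y), Q.IsPath ∧ AltB M Q true ∧ Even Q.length ∧ y ∈ K ∧
        (∀ w ∈ Q.support, w ∈ R.support) ∧ (∀ w ∈ Q.support, w ∈ K → w = y)
  | _, _, Walk.nil, _, _, haK, hzK => absurd hzK haK
  | _, _, @Walk.cons _ _ a c1 _ h1 Walk.nil, hpath, halt, haK, hzK => by
    have h1M : s(a, c1) ∈ M := halt.1.mpr rfl
    exact absurd hzK (fun hc1 => haK (hK c1 hc1 a (by rw [Sym2.eq_swap]; exact h1M)))
  | _, _, @Walk.cons _ _ a c1 _ h1 (@Walk.cons _ _ _ c2 z h2 R2), hpath, halt, haK, hzK => by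
    have h1M : s(a, c1) ∈ M := halt.1.mpr rfl
    have hc1K : c1 ∉ K := fun hc1 => haK (hK c1 hc1 a (by rw [Sym2.eq_swap]; exact h1M))
    have h2M : s(c1, c2) ∉ M := fun hmem => by simpa using halt.2.1.mp hmem
    have hpath1 : (Walk.cons h2 R2).IsPath := hpath.of_cons
    have hpath2 : R2.IsPath := hpath1.of_cons
    have haS : a ∉ (Walk.cons h2 R2).support := ((Walk.cons_isPath_iff _ _).mp hpath).2
    have hc1S : c1 ∉ R2.support := ((Walk.cons_isPath_iff _ _).mp hpath1).2
    have haS2 : a ∉ R2.support := fun hw =>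
      haS (by rw [Walk.support_cons]; exact List.mem_cons_of_mem _ hw)
    by_cases hc2 : c2 ∈ K
    · refine ⟨c2, Walk.cons h1 (Walk.cons h2 Walk.nil), ?_, ?_, ?_, hc2, ?_, ?_⟩
      · rw [Walk.cons_isPath_iff, Walk.cons_isPath_iff]
        refine ⟨⟨Walk.IsPath.nil, by simp [h2.ne]⟩, ?_⟩
        simp only [Walk.support_cons, Walk.support_nil, List.mem_cons,
          List.not_mem_nil, or_false]
        push_neg
        refine ⟨h1.ne, ?_⟩
        intro hac2
        exact haS2 (hac2 ▸ Walk.start_mem_support R2)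
      · exact ⟨by simp [h1M], by simp [h2M], altB_nil⟩
      · exact ⟨1, by simp [Walk.length_cons]⟩
      · intro w hw
        simp only [Walk.support_cons, Walk.support_nil, List.mem_cons,
          List.not_mem_nil, or_false] at hw
        simp only [Walk.support_cons, List.mem_cons]
        rcases hw with rfl | rfl | rfl
        · exact Or.inl rfl
        · exact Or.inr (Or.inl rfl)
        · exact Or.inr (Or.inr (Walk.start_mem_support R2))
      · intro w hw hwK
        simp only [Walk.support_cons, Walk.support_nil, List.mem_cons,
          List.not_mem_nil, or_false] at hw
        rcases hw with rfl | rfl | rfl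
        · exact absurd hwK haK
        · exact absurd hwK hc1K
        · rfl
    · obtain ⟨y, Q2, hQp, hQa, hQe, hyK, hQsub, hQfirst⟩ :=
        trunc hM hK R2 hpath2 halt.2.2 hc2 hzK
      refine ⟨y, Walk.cons h1 (Walk.cons h2 Q2), ?_, ?_, ?_, hyK, ?_, ?_⟩
      · rw [Walk.cons_isPath_iff, Walk.cons_isPath_iff]
        refine ⟨⟨hQp, fun hc1 => hc1S (hQsub c1 hc1)⟩, ?_⟩
        rw [Walk.support_cons]
        intro ha
        rcases List.mem_cons.mp ha with h | h
        · exact h1.ne h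
        · exact haS2 (hQsub a h)
      · exact ⟨by simp [h1M], by simp [h2M], hQa⟩
      · obtain ⟨m, hm⟩ := hQe
        exact ⟨m + 1, by rw [Walk.length_cons, Walk.length_cons, hm]; ring⟩
      · intro w hw
        simp only [Walk.support_cons, List.mem_cons] at hw ⊢
        rcases hw with rfl | rfl | hw
        · exact Or.inl rfl
        · exact Or.inr (Or.inl rfl)
        · exact Or.inr (Or.inr (hQsub w hw))
      · intro w hw hwK
        simp only [Walk.support_cons, List.mem_cons] at hw
        rcases hw with rfl | rfl | hw
        · exact absurd hwK haK
        · exact absurd hwK hc1K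
        · exact hQfirst w hw hwK

section Subtypes

variable {x x' : V}

theorem pm_restrict (hM : IsPerfectMatchingSet G M) (hxx' : s(x, x') ∈ M) :
    IsPerfectMatchingSet (G.comap (Subtype.val : {z : V // z ≠ x ∧ z ≠ x'} → V))
      {e | e.map Subtype.val ∈ M} := by
  refine ⟨⟨?_, ?_⟩, ?_⟩
  · intro e he
    revert he
    induction e using Sym2.ind with
    | _ a b =>
      intro he
      rw [Set.mem_setOf_eq, Sym2.map_pair_eq] at he
      exact ((G.comap Subtype.val).mem_edgeSet).2 ((G.mem_edgeSet).1 (hM.1.1 he))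
  · intro e he f hf hne z hze hzf
    have hmapne : e.map Subtype.val ≠ f.map Subtype.val :=
      fun h => hne (Sym2.map.injective Subtype.val_injective h)
    exact hM.1.2 _ he _ hf hmapne z.val (Sym2.mem_map.2 ⟨z, hze, rfl⟩)
      (Sym2.mem_map.2 ⟨z, hzf, rfl⟩)
  · intro z
    have hw := partner_mem hM z.val
    have hwx : partner hM z.val ≠ x := by
      intro h
      rw [h] at hw
      have h2 := matching_eq hM.1.2 hw hxx' (Sym2.mem_mk_right _ _) (Sym2.mem_mk_left _ _)
      rw [Sym2.eq_iff] at h2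
      rcases h2 with ⟨h1, -⟩ | ⟨h1, -⟩
      · exact z.2.1 h1
      · exact z.2.2 h1
    have hwx' : partner hM z.val ≠ x' := by
      intro h
      rw [h] at hw
      have h2 := matching_eq hM.1.2 hw hxx' (Sym2.mem_mk_right _ _) (Sym2.mem_mk_right _ _)
      rw [Sym2.eq_iff] at h2
      rcases h2 with ⟨h1, -⟩ | ⟨h1, -⟩
      · exact z.2.1 h1
      · exact z.2.2 h1
    exact ⟨s(z, ⟨partner hM z.val, hwx, hwx'⟩),
      by rw [Set.mem_setOf_eq, Sym2.map_pair_eq]; exact hw, Sym2.mem_mk_left _ _⟩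

theorem pm_lift (hadj : G.Adj x x')
    {N₂ : Set (Sym2 {z : V // z ≠ x ∧ z ≠ x'})}
    (hN₂ : IsPerfectMatchingSet (G.comap Subtype.val) N₂) :
    IsPerfectMatchingSet G (Sym2.map Subtype.val '' N₂ ∪ {s(x, x')}) := by
  have hxmem : ∀ (e₂ : Sym2 {z : V // z ≠ x ∧ z ≠ x'}) (w : V),
      w ∈ Sym2.map Subtype.val e₂ → w ≠ x ∧ w ≠ x' := by
    intro e₂ w hw
    rcases Sym2.mem_map.1 hw with ⟨a, ha, rfl⟩
    exact a.2
  refine ⟨⟨?_, ?_⟩, ?_⟩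
  · intro e he
    rcases he with ⟨e₂, he₂, rfl⟩ | he
    · have hes := hN₂.1.1 he₂
      revert hes
      induction e₂ using Sym2.ind with
      | _ a b =>
        intro hes
        rw [Sym2.map_pair_eq]
        exact (G.mem_edgeSet).2 (((G.comap Subtype.val).mem_edgeSet).1 hes)
    · rw [Set.mem_singleton_iff] at he
      subst he
      exact (G.mem_edgeSet).2 hadj
  · intro e he f hf hne z hze hzf
    rcases he with ⟨e₂, he₂, rfl⟩ | he
    · rcases hf with ⟨f₂, hf₂, rfl⟩ | hf
      · have hne₂ : e₂ ≠ f₂ := fun h => hne (by rw [h])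
        rcases Sym2.mem_map.1 hze with ⟨a, ha, rfl⟩
        rcases Sym2.mem_map.1 hzf with ⟨b, hb, hab⟩
        have hba : b = a := Subtype.val_injective hab
        subst hba
        exact hN₂.1.2 _ he₂ _ hf₂ hne₂ b ha hb
      · have hz2 := hxmem e₂ z hze
        rw [Set.mem_singleton_iff] at hf
        subst hf
        rcases Sym2.mem_iff.mp hzf with rfl | rfl
        · exact hz2.1 rfl
        · exact hz2.2 rfl
    · rw [Set.mem_singleton_iff] at he
      subst he
      rcases hf with ⟨f₂, hf₂, rfl⟩ | hf
      · have hz2 := hxmem f₂ z hzf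
        rcases Sym2.mem_iff.mp hze with rfl | rfl
        · exact hz2.1 rfl
        · exact hz2.2 rfl
      · rw [Set.mem_singleton_iff] at hf
        subst hf
        exact hne rfl
  · intro v
    by_cases hv : v ≠ x ∧ v ≠ x'
    · obtain ⟨e₂, he₂, hve⟩ := hN₂.2 ⟨v, hv⟩
      exact ⟨e₂.map Subtype.val, Or.inl ⟨e₂, he₂, rfl⟩, Sym2.mem_map.2 ⟨⟨v, hv⟩, hve, rfl⟩⟩
    · rcases not_and_or.mp hv with h | h
      · rw [not_ne_iff] at h
        subst h
        exact ⟨s(v, x'), Or.inr rfl, Sym2.mem_mk_left _ _⟩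
      · rw [not_ne_iff] at h
        subst h
        exact ⟨s(x, v), Or.inr rfl, Sym2.mem_mk_right _ _⟩

theorem allowed_lift (hadj : G.Adj x x') {e₂ : Sym2 {z : V // z ≠ x ∧ z ≠ x'}}
    (ha : Allowed (G.comap Subtype.val) e₂) : Allowed G (e₂.map Subtype.val) := by
  obtain ⟨N₂, hN₂, he₂⟩ := ha
  exact ⟨_, pm_lift hadj hN₂, Or.inl ⟨e₂, he₂, rfl⟩⟩

end Subtypes

theorem altB_map {W : Type*} {H : SimpleGraph W} {M' : Set (Sym2 W)} (f : H →g G)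
    (hfM : ∀ a b : W, (s(f a, f b) ∈ M) ↔ s(a, b) ∈ M') :
    ∀ {a b : W} (q : H.Walk a b) (t : Bool), AltB M' q t → AltB M (q.map f) t
  | _, _, Walk.nil, _, _ => altB_nil
  | _, _, @Walk.cons _ _ a c b hadj q, t, h => by
    rw [Walk.map_cons]
    exact ⟨by rw [hfM a c]; exact h.1, altB_map f hfM q (!t) h.2⟩

theorem nat_min {P : ℕ → Prop} (h : ∃ n, P n) : ∃ n, P n ∧ ∀ m, m < n → ¬ P m := by
  obtain ⟨n, hn⟩ := h
  induction n using Nat.strong_induction_on with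
  | _ n ih =>
    by_cases h2 : ∃ m, m < n ∧ P m
    · obtain ⟨m, hm, hPm⟩ := h2
      exact ih m hm hPm
    · push_neg at h2
      exact ⟨n, hn, fun m hm hPm => h2 m hm hPm⟩

theorem cycle_machine [Fintype V] {N : Set (Sym2 V)} (hM : IsPerfectMatchingSet G M)
    (hN : IsPerfectMatchingSet G N) {x : V}
    (hne : partner hN x ≠ partner hM x) (K : Set V)
    (hKM : ∀ z ∈ K, partner hM z ∈ K) (hxK : x ∉ K) :
    (∃ y ∈ K, ∃ P : G.Walk x y, P.IsPath ∧ AltB M P true ∧ Even P.length ∧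
        (∀ e ∈ P.edges, e ∈ M ∨ e ∈ N) ∧ (∀ z ∈ P.support, z ∈ K → z = y)) ∨
    (∃ Z : Set V, x ∈ Z ∧ partner hM x ∈ Z ∧ (∀ z ∈ Z, partner hN z ∈ Z) ∧
        (∀ z ∈ Z, z ∉ K) ∧
        ∃ N' : Set (Sym2 V), IsPerfectMatchingSet G N' ∧ s(x, partner hM x) ∈ N' ∧
          (∀ e ∈ N, (∀ z : V, z ∈ e → z ∉ Z) → e ∈ N')) := by
  classical
  let wf : ℕ → V := fun k =>
    Nat.rec x (fun m prev => if m % 2 = 0 then partner hM prev else partner hN prev) k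
  have wf0 : wf 0 = x := rfl
  have wfs : ∀ k : ℕ, wf (k + 1) =
      if k % 2 = 0 then partner hM (wf k) else partner hN (wf k) := fun k => rfl
  have wfsE : ∀ k : ℕ, k % 2 = 0 → wf (k + 1) = partner hM (wf k) := by
    intro k hk; rw [wfs k, if_pos hk]
  have wfsO : ∀ k : ℕ, k % 2 = 1 → wf (k + 1) = partner hN (wf k) := by
    intro k hk; rw [wfs k, if_neg (by omega)]
  have hInv : ∀ k : ℕ, partner hN (wf k) ≠ partner hM (wf k) := by
    intro k
    induction k with
    | zero => exact hne
    | succ k ih =>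
      rcases Nat.mod_two_eq_zero_or_one k with hk | hk
      · rw [wfsE k hk]
        intro hEq
        rw [partner_invol hM] at hEq
        have h2 := congrArg (partner hN) hEq
        rw [partner_invol hN] at h2
        exact ih h2.symm
      · rw [wfsO k hk]
        intro hEq
        have h3 : partner hN (partner hN (wf k)) = wf k := partner_invol hN _
        rw [h3] at hEq
        have h2 := congrArg (partner hM) hEq.symm
        rw [partner_invol hM] at h2
        exact ih h2
  have edgeM : ∀ k : ℕ, k % 2 = 0 → s(wf k, wf (k + 1)) ∈ M := by
    intro k hk; rw [wfsE k hk]; exact partner_mem hM _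
  have edgeN : ∀ k : ℕ, k % 2 = 1 → s(wf k, wf (k + 1)) ∈ N := by
    intro k hk; rw [wfsO k hk]; exact partner_mem hN _
  have edgeNM : ∀ k : ℕ, k % 2 = 1 → s(wf k, wf (k + 1)) ∉ M := by
    intro k hk hmem
    have h1 := partner_eq hM hmem
    rw [wfsO k hk] at h1
    exact hInv k (h1.symm)
  have adjW : ∀ k : ℕ, G.Adj (wf k) (wf (k + 1)) := by
    intro k
    rcases Nat.mod_two_eq_zero_or_one k with hk | hk
    · exact (G.mem_edgeSet).1 (hM.1.1 (edgeM k hk))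
    · exact (G.mem_edgeSet).1 (hN.1.1 (edgeN k hk))
  have stepNe : ∀ k : ℕ, wf (k + 1) ≠ wf k := by
    intro k
    rcases Nat.mod_two_eq_zero_or_one k with hk | hk
    · rw [wfsE k hk]; exact partner_ne hM _
    · rw [wfsO k hk]; exact partner_ne hN _
  have hPex : ∃ j, ∃ i, i < j ∧ wf i = wf j := by
    obtain ⟨i, j, hij, hEq⟩ := Finite.exists_ne_map_eq_of_infinite wf
    rcases lt_or_gt_of_ne hij with h | h
    · exact ⟨j, i, h, hEq⟩
    · exact ⟨i, j, h, hEq.symm⟩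
  obtain ⟨j₀, ⟨i₀, hi₀lt, hi₀eq⟩, hj₀min⟩ := nat_min hPex
  have hinj : ∀ i j : ℕ, i < j → j < j₀ → wf i ≠ wf j := by
    intro i j hij hj hEq
    exact hj₀min j hj ⟨i, hij, hEq⟩
  have backE : ∀ k : ℕ, 1 ≤ k → k % 2 = 1 → wf (k - 1) = partner hM (wf k) := by
    intro k h1 hk
    have h2 := wfsE (k - 1) (by omega)
    rw [show k - 1 + 1 = k by omega] at h2
    rw [h2, partner_invol hM]
  have backO : ∀ k : ℕ, 1 ≤ k → k % 2 = 0 → wf (k - 1) = partner hN (wf k) := by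
    intro k h1 hk
    have h2 := wfsO (k - 1) (by omega)
    rw [show k - 1 + 1 = k by omega] at h2
    rw [h2, partner_invol hN]
  have hi00 : i₀ = 0 := by
    by_contra hi0ne
    have hi0pos : 1 ≤ i₀ := by omega
    rcases Nat.mod_two_eq_zero_or_one i₀ with hpi | hpi <;>
      rcases Nat.mod_two_eq_zero_or_one j₀ with hpj | hpj
    · -- both even : compare predecessors (via pN)
      have e1 := backO i₀ hi0pos hpi
      have e2 := backO j₀ (by omega) hpj
      exact hinj (i₀ - 1) (j₀ - 1) (by omega) (by omega)
        (by rw [e1, e2, hi₀eq])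
    · -- i₀ even, j₀ odd : successors via pM
      have e1 := wfsE i₀ hpi
      have e2 := backE j₀ (by omega) hpj
      have heq2 : wf (i₀ + 1) = wf (j₀ - 1) := by rw [e1, e2, hi₀eq]
      rcases lt_trichotomy (i₀ + 1) (j₀ - 1) with h | h | h
      · exact hinj _ _ h (by omega) heq2
      · omega
      · have h4 : i₀ + 1 = j₀ := by omega
        exact stepNe i₀ (by rw [h4, ← hi₀eq])
    · -- i₀ odd, j₀ even : successors via pN
      have e1 := wfsO i₀ hpi
      have e2 := backO j₀ (by omega) hpj
      have heq2 : wf (i₀ + 1) = wf (j₀ - 1) := by rw [e1, e2, hi₀eq]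
      rcases lt_trichotomy (i₀ + 1) (j₀ - 1) with h | h | h
      · exact hinj _ _ h (by omega) heq2
      · omega
      · have h4 : i₀ + 1 = j₀ := by omega
        exact stepNe i₀ (by rw [h4, ← hi₀eq])
    · -- both odd : predecessors via pM
      have e1 := backE i₀ hi0pos hpi
      have e2 := backE j₀ (by omega) hpj
      exact hinj (i₀ - 1) (j₀ - 1) (by omega) (by omega)
        (by rw [e1, e2, hi₀eq])
  rw [hi00] at hi₀lt hi₀eq
  have hj₀pos : 0 < j₀ := hi₀lt
  have hj2 : j₀ % 2 = 0 := by
    by_contra hodd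
    have hpj : j₀ % 2 = 1 := by omega
    have e2 := backE j₀ (by omega) hpj
    have h3 : wf (j₀ - 1) = wf 1 := by
      rw [e2, ← hi₀eq, ← wfsE 0 (by omega)]
      rfl
    rcases lt_trichotomy 1 (j₀ - 1) with h | h | h
    · exact hinj 1 (j₀ - 1) h (by omega) h3.symm
    · omega
    · have hj1 : j₀ = 1 := by omega
      have h5 : wf 1 = wf 0 := by
        rw [show (1 : ℕ) = j₀ by omega]
        exact hi₀eq.symm
      exact stepNe 0 h5
  have hret : wf j₀ = x := hi₀eq.symm
  have hlast : wf (j₀ - 1) = partner hN x := by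
    have h1 := backO j₀ (by omega) hj2
    rw [hret] at h1
    exact h1
  have hxZwf : wf 1 = partner hM x := wfsE 0 (by omega)
  by_cases hZK : ∃ k, k < j₀ ∧ wf k ∈ K
  · left
    obtain ⟨k₀, ⟨hk₀lt, hk₀K⟩, hk₀min⟩ := nat_min hZK
    have hk₀minK : ∀ m, m < k₀ → wf m ∉ K := by
      intro m hm hmK
      exact hk₀min m hm ⟨by omega, hmK⟩
    have hk₀pos : 0 < k₀ := by
      rcases Nat.eq_zero_or_pos k₀ with h | h
      · rw [h] at hk₀K
        exact absurd hk₀K hxK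
      · exact h
    have hk₀even : k₀ % 2 = 0 := by
      by_contra hodd
      have hk2 : k₀ % 2 = 1 := by omega
      have h2 := backE k₀ (by omega) hk2
      exact hk₀minK (k₀ - 1) (by omega) (h2 ▸ hKM _ hk₀K)
    have hpath : ∀ k, k < j₀ → ∃ P : G.Walk x (wf k), P.IsPath ∧ AltB M P true ∧
        P.length = k ∧ (∀ e ∈ P.edges, e ∈ M ∨ e ∈ N) ∧
        (∀ z ∈ P.support, ∃ m, m ≤ k ∧ wf m = z) := by
      intro k
      induction k with
      | zero =>
        intro _
        refine ⟨Walk.nil, Walk.IsPath.nil, altB_nil, rfl, by simp [Walk.edges_nil], ?_⟩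
        intro z hz
        rw [Walk.support_nil, List.mem_singleton] at hz
        exact ⟨0, le_refl 0, hz.symm⟩
      | succ k ih =>
        intro hk1
        obtain ⟨P, hPp, hPa, hPl, hPe, hPs⟩ := ih (by omega)
        refine ⟨P.concat (adjW k), ?_, ?_, ?_, ?_, ?_⟩
        · apply Walk.IsPath.mk'
          rw [Walk.support_concat]
          apply List.Nodup.append hPp.support_nodup (List.nodup_singleton _)
          intro w hw hw2
          rw [List.mem_singleton] at hw2
          subst hw2
          obtain ⟨m, hm, hmEq⟩ := hPs _ hw
          exact hinj m (k + 1) (by omega) hk1 hmEq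
        · rw [Walk.concat_eq_append, altB_append, hPl]
          refine ⟨hPa, ?_⟩
          rcases Nat.mod_two_eq_zero_or_one k with hk2 | hk2
          · have hd : decide (Odd k) = false := by simp [Nat.odd_iff, hk2]
            rw [hd, Bool.false_xor]
            exact ⟨by simp [edgeM k hk2], altB_nil⟩
          · have hd : decide (Odd k) = true := by simp [Nat.odd_iff, hk2]
            rw [hd, Bool.true_xor, Bool.not_true]
            exact ⟨by simp [edgeNM k hk2], altB_nil⟩
        · rw [Walk.length_concat, hPl]
        · intro e he
          rw [Walk.edges_concat, List.concat_eq_append, List.mem_append,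
            List.mem_singleton] at he
          rcases he with he | rfl
          · exact hPe e he
          · rcases Nat.mod_two_eq_zero_or_one k with hk2 | hk2
            · exact Or.inl (edgeM k hk2)
            · exact Or.inr (edgeN k hk2)
        · intro z hz
          rw [Walk.support_concat, List.mem_append,
            List.mem_singleton] at hz
          rcases hz with hz | rfl
          · obtain ⟨m, hm, hmEq⟩ := hPs z hz
            exact ⟨m, by omega, hmEq⟩
          · exact ⟨k + 1, le_refl _, rfl⟩
    obtain ⟨P, hPp, hPa, hPl, hPe, hPs⟩ := hpath k₀ hk₀lt
    refine ⟨wf k₀, hk₀K, P, hPp, hPa, ?_, hPe, ?_⟩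
    · rw [hPl]
      exact (Nat.even_iff).2 hk₀even
    · intro z hz hzK
      obtain ⟨m, hm, rfl⟩ := hPs z hz
      rcases lt_or_eq_of_le hm with h | h
      · exact absurd hzK (hk₀minK m h)
      · rw [h]
  · right
    push_neg at hZK
    have hZdisj : ∀ z : V, (∃ k, k < j₀ ∧ wf k = z) → z ∉ K := by
      rintro z ⟨k, hk, rfl⟩
      exact hZK k hk
    have hZpM : ∀ z : V, (∃ k, k < j₀ ∧ wf k = z) →
        (∃ k, k < j₀ ∧ wf k = partner hM z) := by
      rintro z ⟨k, hk, rfl⟩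
      rcases Nat.mod_two_eq_zero_or_one k with hk2 | hk2
      · exact ⟨k + 1, by omega, wfsE k hk2⟩
      · exact ⟨k - 1, by omega, backE k (by omega) hk2⟩
    have hZpN : ∀ z : V, (∃ k, k < j₀ ∧ wf k = z) →
        (∃ k, k < j₀ ∧ wf k = partner hN z) := by
      rintro z ⟨k, hk, rfl⟩
      rcases Nat.mod_two_eq_zero_or_one k with hk2 | hk2
      · rcases Nat.eq_zero_or_pos k with rfl | hkpos
        · exact ⟨j₀ - 1, by omega, hlast⟩
        · exact ⟨k - 1, by omega, backO k (by omega) hk2⟩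
      · by_cases hk1 : k + 1 < j₀
        · exact ⟨k + 1, hk1, wfsO k hk2⟩
        · have hkj : k + 1 = j₀ := by omega
          refine ⟨0, hj₀pos, ?_⟩
          rw [wf0, ← hret, ← hkj]
          exact wfsO k hk2
    refine ⟨{z : V | ∃ k, k < j₀ ∧ wf k = z}, ⟨0, hj₀pos, wf0⟩, ⟨1, by omega, hxZwf⟩,
      hZpN, hZdisj, ?_⟩
    refine ⟨{e | (e ∈ N ∧ ∀ z : V, z ∈ e → ¬(∃ k, k < j₀ ∧ wf k = z)) ∨
      (e ∈ M ∧ ∃ z : V, z ∈ e ∧ (∃ k, k < j₀ ∧ wf k = z))}, ⟨⟨?_, ?_⟩, ?_⟩, ?_, ?_⟩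
    · intro e he
      rcases he with ⟨he, -⟩ | ⟨he, -⟩
      · exact hN.1.1 he
      · exact hM.1.1 he
    · intro e he f hf hnef z hze hzf
      have hMside : ∀ g : Sym2 V, g ∈ M → (∃ w : V, w ∈ g ∧ (∃ k, k < j₀ ∧ wf k = w)) →
          ∀ w : V, w ∈ g → (∃ k, k < j₀ ∧ wf k = w) := by
        rintro g hg ⟨w, hwg, hwZ⟩ w' hw'
        have hgw := eq_partner_edge hM hg hwg
        rw [hgw] at hw'
        rcases Sym2.mem_iff.mp hw' with rfl | rfl
        · exact hwZ
        · exact hZpM w hwZ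
      rcases he with ⟨heN, heZ⟩ | ⟨heM2, heZ⟩
      · rcases hf with ⟨hfN, hfZ⟩ | ⟨hfM, hfZ⟩
        · exact hN.1.2 _ heN _ hfN hnef z hze hzf
        · exact heZ z hze (hMside f hfM hfZ z hzf)
      · rcases hf with ⟨hfN, hfZ⟩ | ⟨hfM, hfZ⟩
        · exact hfZ z hzf (hMside e heM2 heZ z hze)
        · exact hM.1.2 _ heM2 _ hfM hnef z hze hzf
    · intro v
      rcases Classical.em (∃ k, k < j₀ ∧ wf k = v) with hv | hv
      · exact ⟨s(v, partner hM v), Or.inr ⟨partner_mem hM v, v, Sym2.mem_mk_left _ _, hv⟩,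
          Sym2.mem_mk_left _ _⟩
      · refine ⟨s(v, partner hN v), Or.inl ⟨partner_mem hN v, ?_⟩, Sym2.mem_mk_left _ _⟩
        intro z hz
        rcases Sym2.mem_iff.mp hz with rfl | rfl
        · exact hv
        · intro hpNZ
          have h5 := hZpN _ hpNZ
          rw [partner_invol hN] at h5
          exact hv h5
    · exact Or.inr ⟨partner_mem hM x, x, Sym2.mem_mk_left _ _, ⟨0, hj₀pos, wf0⟩⟩
    · intro e he hz
      exact Or.inl ⟨he, hz⟩

theorem allowed_edge_mem {e : Sym2 V} (heG : e ∈ G.edgeSet) (ha : Allowed G e) :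
    e ∈ (allowedSubgraph G).edgeSet := by
  revert heG ha
  induction e using Sym2.ind with
  | _ a b =>
    intro heG ha
    exact (((allowedSubgraph G)).mem_edgeSet).2 ⟨(G.mem_edgeSet).1 heG, ha⟩

universe u

theorem thmT : ∀ (n : ℕ) (V : Type u) [Fintype V] [DecidableEq V] (G : SimpleGraph V)
    (M : Set (Sym2 V)), IsPerfectMatchingSet G M → Fintype.card V ≤ n →
    ∀ x s : V, x ≠ s → (allowedSubgraph G).Reachable x s →
    ∃ P : G.Walk x s, P.IsPath ∧ (∀ e ∈ P.edges, Allowed G e) ∧ AltB M P true := by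
  intro n
  induction n with
  | zero =>
    intro V _ _ G M hM hcard x s hxs _
    have h0 := Fintype.card_pos_iff.mpr ⟨x⟩
    omega
  | succ n ih =>
    intro V instF instD G M hM hcard x s hxs hreach
    by_cases hsx' : s = partner hM x
    · subst hsx'
      refine ⟨Walk.cons (partner_adj hM x) Walk.nil, ?_, ?_, ?_⟩
      · rw [Walk.cons_isPath_iff]
        refine ⟨Walk.IsPath.nil, ?_⟩
        rw [Walk.support_nil, List.mem_singleton]
        exact fun h => partner_ne hM x h.symm
      · intro e he
        rw [Walk.edges_cons] at he
        rcases List.mem_cons.mp he with rfl | he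
        · exact allowed_of_mem_pm hM (partner_mem hM x)
        · simp [Walk.edges_nil] at he
      · exact ⟨by simp [partner_mem hM x], altB_nil⟩
    · have hs2 : s ≠ x ∧ s ≠ partner hM x := ⟨Ne.symm hxs, hsx'⟩
      let V2 := {z : V // z ≠ x ∧ z ≠ partner hM x}
      let G2 : SimpleGraph V2 := G.comap (Subtype.val : V2 → V)
      have hM2 : IsPerfectMatchingSet G2 {e : Sym2 V2 | Sym2.map Subtype.val e ∈ M} :=
        pm_restrict hM (partner_mem hM x)
      let K : Set V := {b : V | ∃ hb : b ≠ x ∧ b ≠ partner hM x,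
        (allowedSubgraph G2).Reachable ⟨b, hb⟩ ⟨s, hs2⟩}
      have hsK : s ∈ K := ⟨hs2, Reachable.refl _⟩
      have hxK : x ∉ K := fun h => h.choose.1 rfl
      have hcard2 : Fintype.card V2 ≤ n := by
        have h1 : Fintype.card V2 < Fintype.card V :=
          Fintype.card_subtype_lt (x := x) (by simp)
        omega
      let hom : G2 →g G := ⟨Subtype.val, fun {a b} h => h⟩
      have buildTail : ∀ b : V, b ∈ K → ∃ P3 : G.Walk b s, P3.IsPath ∧
          (∀ e ∈ P3.edges, Allowed G e) ∧ AltB M P3 true ∧ (∀ z ∈ P3.support, z ∈ K) := by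
        intro b hbK
        obtain ⟨hb2, hbre⟩ := hbK
        by_cases hbs : b = s
        · subst hbs
          refine ⟨Walk.nil, Walk.IsPath.nil, ?_, altB_nil, ?_⟩
          · intro e he
            simp [Walk.edges_nil] at he
          · intro z hz
            rw [Walk.support_nil, List.mem_singleton] at hz
            subst hz
            exact ⟨hb2, hbre⟩
        · obtain ⟨P2, hP2p, hP2e, hP2a⟩ := ih V2 G2 {e : Sym2 V2 | Sym2.map Subtype.val e ∈ M}
            hM2 hcard2 ⟨b, hb2⟩ ⟨s, hs2⟩ (fun h => hbs (congrArg Subtype.val h)) hbre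
          have hP2edge : ∀ e2 ∈ P2.edges, e2 ∈ (allowedSubgraph G2).edgeSet := fun e2 he2 =>
            allowed_edge_mem (Walk.edges_subset_edgeSet P2 he2) (hP2e e2 he2)
          refine ⟨P2.map hom, map_isPath_of_injective Subtype.val_injective hP2p, ?_, ?_, ?_⟩
          · intro e he
            rw [Walk.edges_map, List.mem_map] at he
            obtain ⟨e2, he2, rfl⟩ := he
            exact allowed_lift (partner_adj hM x) (hP2e e2 he2)
          · exact altB_map hom (fun a b => Iff.rfl) P2 true hP2a
          · intro z hz
            rw [Walk.support_map, List.mem_map] at hz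
            obtain ⟨z2, hz2, rfl⟩ := hz
            have hre := reach_of_walk P2 hP2edge z2 hz2
            exact ⟨z2.2, hre.symm.trans hbre⟩
      obtain ⟨W⟩ := hreach
      obtain ⟨a, b, hab, haK, hbK⟩ := exists_crossing W hxK hsK
      have habG : G.Adj a b := hab.1
      have habA : Allowed G s(a, b) := hab.2
      have hKM : ∀ z ∈ K, partner hM z ∈ K := by
        rintro z ⟨hz2, hzre⟩
        have hw := partner_mem hM z
        have hwx : partner hM z ≠ x := by
          intro h
          rw [h] at hw
          have h2 := matching_eq hM.1.2 hw (partner_mem hM x) (Sym2.mem_mk_right _ _)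
            (Sym2.mem_mk_left _ _)
          rw [Sym2.eq_iff] at h2
          rcases h2 with ⟨h1, -⟩ | ⟨h1, -⟩
          · exact hz2.1 h1
          · exact hz2.2 h1
        have hwx' : partner hM z ≠ partner hM x := by
          intro h
          have h2 := congrArg (partner hM) h
          rw [partner_invol hM, partner_invol hM] at h2
          exact hz2.1 h2
        have hM2e : s((⟨z, hz2⟩ : V2), (⟨partner hM z, hwx, hwx'⟩ : V2)) ∈
            {e : Sym2 V2 | Sym2.map Subtype.val e ∈ M} := by
          rw [Set.mem_setOf_eq, Sym2.map_pair_eq]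
          exact hw
        have hadj2 : (allowedSubgraph G2).Adj ⟨z, hz2⟩ ⟨partner hM z, hwx, hwx'⟩ :=
          ⟨(G2.mem_edgeSet).1 (hM2.1.1 hM2e), allowed_of_mem_pm hM2 hM2e⟩
        exact ⟨⟨hwx, hwx'⟩, hadj2.symm.reachable.trans hzre⟩
      by_cases hax' : a = partner hM x
      · subst hax'
        obtain ⟨P3, hP3p, hP3e, hP3a, hP3s⟩ := buildTail b hbK
        obtain ⟨hb2, -⟩ := hbK
        have hxb : s(partner hM x, b) ∉ M := by
          intro hmem
          have h1 := partner_eq hM hmem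
          rw [partner_invol hM] at h1
          exact hb2.1 h1.symm
        refine ⟨Walk.cons (partner_adj hM x) (Walk.cons habG P3), ?_, ?_, ?_⟩
        · rw [Walk.cons_isPath_iff, Walk.cons_isPath_iff]
          refine ⟨⟨hP3p, ?_⟩, ?_⟩
          · intro hmem
            exact (hP3s _ hmem).choose.2 rfl
          · rw [Walk.support_cons]
            intro hmem
            rcases List.mem_cons.mp hmem with h | h
            · exact partner_ne hM x h.symm
            · exact (hP3s _ h).choose.1 rfl
        · intro e he
          rw [Walk.edges_cons, Walk.edges_cons] at he
          rcases List.mem_cons.mp he with rfl | he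
          · exact allowed_of_mem_pm hM (partner_mem hM x)
          · rcases List.mem_cons.mp he with rfl | he
            · exact habA
            · exact hP3e e he
        · exact ⟨by simp [partner_mem hM x], by simp [hxb], hP3a⟩
      · obtain ⟨N, hN, habN⟩ := habA
        obtain ⟨hb2, hbre⟩ := hbK
        by_cases hc : partner hN x = partner hM x
        · exfalso
          have hNx : s(x, partner hM x) ∈ N := by
            rw [← hc]
            exact partner_mem hN x
          have haxne : a ≠ x := by
            intro h
            subst h
            have h1 := partner_eq hN habN
            rw [hc] at h1
            exact hb2.2 h1.symm
          have hN2 := pm_restrict hN hNx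
          have ha2 : a ≠ x ∧ a ≠ partner hM x := ⟨haxne, hax'⟩
          have he2 : s((⟨a, ha2⟩ : V2), (⟨b, hb2⟩ : V2)) ∈
              {e : Sym2 V2 | Sym2.map Subtype.val e ∈ N} := by
            rw [Set.mem_setOf_eq, Sym2.map_pair_eq]
            exact habN
          have hadj2 : (allowedSubgraph G2).Adj ⟨a, ha2⟩ ⟨b, hb2⟩ :=
            ⟨(G2.mem_edgeSet).1 (hN2.1.1 he2), allowed_of_mem_pm hN2 he2⟩
          exact haK ⟨ha2, hadj2.reachable.trans hbre⟩
        · rcases cycle_machine hM hN hc K hKM hxK with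
            ⟨y, hyK, P, hPp, hPa, hPev, hPe, hPfirst⟩ |
            ⟨Z, hxZ, hx'Z, hZpN, hZK, N', hN', hN'x, hN'pres⟩
          · obtain ⟨P3, hP3p, hP3e, hP3a, hP3s⟩ := buildTail y hyK
            refine ⟨P.append P3, ?_, ?_, ?_⟩
            · apply Walk.IsPath.mk'
              rw [Walk.support_append]
              apply List.Nodup.append hPp.support_nodup
                ((List.tail_sublist P3.support).nodup hP3p.support_nodup)
              intro w hw hw2
              have hwP3 : w ∈ P3.support := List.mem_of_mem_tail hw2
              have hwy : w = y := hPfirst w hw (hP3s w hwP3)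
              subst hwy
              have hnd := hP3p.support_nodup
              rw [Walk.support_eq_cons] at hnd
              exact (List.nodup_cons.mp hnd).1 hw2
            · intro e he
              rw [Walk.edges_append, List.mem_append] at he
              rcases he with he | he
              · rcases hPe e he with h | h
                · exact allowed_of_mem_pm hM h
                · exact allowed_of_mem_pm hN h
              · exact hP3e e he
            · rw [altB_append]
              refine ⟨hPa, ?_⟩
              have hd : decide (Odd P.length) = false := by
                simp [Nat.odd_iff, Nat.even_iff.mp hPev]
              rw [hd, Bool.false_xor]
              exact hP3a
          · exfalso
            have hbZ : b ∉ Z := fun h => hZK b h ⟨hb2, hbre⟩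
            have haZ : a ∉ Z := by
              intro h
              have h2 := hZpN a h
              rw [partner_eq hN habN] at h2
              exact hbZ h2
            have habN' : s(a, b) ∈ N' := hN'pres _ habN (by
              intro z hz
              rcases Sym2.mem_iff.mp hz with rfl | rfl
              · exact haZ
              · exact hbZ)
            have hN'2 := pm_restrict hN' hN'x
            have ha2 : a ≠ x ∧ a ≠ partner hM x :=
              ⟨fun h => haZ (h ▸ hxZ), fun h => haZ (h ▸ hx'Z)⟩
            have he2 : s((⟨a, ha2⟩ : V2), (⟨b, hb2⟩ : V2)) ∈
                {e : Sym2 V2 | Sym2.map Subtype.val e ∈ N'} := by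
              rw [Set.mem_setOf_eq, Sym2.map_pair_eq]
              exact habN'
            have hadj2 : (allowedSubgraph G2).Adj ⟨a, ha2⟩ ⟨b, hb2⟩ :=
              ⟨(G2.mem_edgeSet).1 (hN'2.1.1 he2), allowed_of_mem_pm hN'2 he2⟩
            exact haK ⟨ha2, hadj2.reachable.trans hbre⟩

theorem isBalanced_of {a b : V} {p : G.Walk a b} (hp : p.IsPath) (hev : Even p.length)
    (ha : AltB M p true) : IsBalancedPath M p :=
  ⟨hp, hev, malt_of_altB hp ha, altB_head ha⟩

theorem length_pos_of_ne {a b : V} (p : G.Walk a b) (h : a ≠ b) : 0 < p.length := by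
  cases p with
  | nil => exact absurd rfl h
  | cons h' q => exact Nat.succ_pos _

theorem append_path_alt {x y z : V} {Q : G.Walk x y} {R : G.Walk y z}
    (hQ : Q.IsPath) (hR : R.IsPath) (hQa : AltB M Q true) (hQev : Even Q.length)
    (hRa : AltB M R true)
    (hdisj : ∀ w ∈ Q.support, w ∈ R.support → w = y) :
    (Q.append R).IsPath ∧ AltB M (Q.append R) true := by
  constructor
  · apply Walk.IsPath.mk'
    rw [Walk.support_append]
    apply List.Nodup.append hQ.support_nodup
      ((List.tail_sublist R.support).nodup hR.support_nodup)
    intro w hw hw2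
    have hwy : w = y := hdisj w hw (List.mem_of_mem_tail hw2)
    subst hwy
    have hnd := hR.support_nodup
    rw [Walk.support_eq_cons] at hnd
    exact (List.nodup_cons.mp hnd).1 hw2
  · rw [altB_append]
    refine ⟨hQa, ?_⟩
    have hd : decide (Odd Q.length) = false := by
      simp [Nat.odd_iff, Nat.even_iff.mp hQev]
    rw [hd, Bool.false_xor]
    exact hRa

theorem takeUntil_cons [DecidableEq V] {u c w y : V} (h : G.Adj u c) (r : G.Walk c w)
    (hy : y ∈ (Walk.cons h r).support) (hne : u ≠ y) (hyr : y ∈ r.support) :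
    (Walk.cons h r).takeUntil y hy = Walk.cons h (r.takeUntil y hyr) := by
  simp only [Walk.takeUntil]
  rw [dif_neg hne]

theorem dropUntil_cons [DecidableEq V] {u c w y : V} (h : G.Adj u c) (r : G.Walk c w)
    (hy : y ∈ (Walk.cons h r).support) (hne : u ≠ y) (hyr : y ∈ r.support) :
    (Walk.cons h r).dropUntil y hy = r.dropUntil y hyr := by
  simp only [Walk.dropUntil]
  rw [dif_neg hne]

end S8

/-- Let `G` be factorizable with perfect matching `M`, `X` a separating
set, and `H` a factor-component with `V(H) ∩ X = ∅`. Let `P` be an `M`-ear relative to `X`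
through `H` with end vertices `u, v ∈ X`, and `Y := (V(H) ∪ V(P)) ∖ {u, v}`. Then for
every `x ∈ Y`: (i) there is an internal vertex `y` of `P` and an `M`-balanced path `Q`
from `x` to `y` with `V(Q) ⊆ Y` and `V(Q) ∩ V(P) = {y}`; and (ii) for one of the end
vertices `w ∈ {u, v}`, the concatenation of `Q` with the segment of `P` from `y` to `w`
is an `M`-balanced path from `x` to `w` all of whose vertices except `w` lie in `Y`. -/
theorem statement_8 {V : Type*} [Fintype V] [DecidableEq V] (G : SimpleGraph V)
    (hG : Factorizable G) (M : Set (Sym2 V)) (hM : IsPerfectMatchingSet G M)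
    (X : Set V) (hXsep : Separating G X)
    (C : Set V) (hC : IsFactorComponent G C) (hCX : Disjoint C X)
    (u v : V) (p : G.Walk u v) (hp : IsMEarThrough G M X C p)
    (Y : Set V) (hY : Y = (C ∪ {x : V | x ∈ p.support}) \ {u, v}) :
    ∀ x ∈ Y, ∃ (y : V) (hy : y ∈ p.support) (Q : G.Walk x y),
      y ≠ u ∧ y ≠ v ∧ IsBalancedPath M Q ∧
      (∀ z ∈ Q.support, z ∈ Y) ∧ (∀ z ∈ Q.support, z ∈ p.support → z = y) ∧
      ((IsBalancedPath M (Q.append (p.takeUntil y hy).reverse) ∧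
          ∀ z ∈ (Q.append (p.takeUntil y hy).reverse).support, z ≠ u → z ∈ Y) ∨
        (IsBalancedPath M (Q.append (p.dropUntil y hy)) ∧
          ∀ z ∈ (Q.append (p.dropUntil y hy)).support, z ≠ v → z ∈ Y)) := by
  classical
  intro x hxY
  obtain ⟨hEar, w0, hw0p, hw0X, hw0C⟩ := hp
  obtain ⟨huX, hvX, hshape, x₀, y₀, hux, q, hyv, hpeq, hqsat, hqX⟩ := hEar
  obtain ⟨hqpath, hqodd, hqcov⟩ := hqsat
  subst hY
  subst hpeq
  have hq_altB : S8.AltB M q true := S8.sat_altB hM q hqpath hqcov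
  have huq : u ∉ q.support := fun h => hqX u h huX
  have hvq : v ∉ q.support := fun h => hqX v h hvX
  have hM_ux : s(u, x₀) ∉ M := by
    intro hmem
    obtain ⟨e, he, heM, hxe⟩ := hqcov x₀ (Walk.start_mem_support q)
    have h1 : e = s(u, x₀) :=
      S8.matching_eq hM.1.2 heM hmem hxe (Sym2.mem_mk_right u x₀)
    have hu_in : u ∈ e := h1 ▸ Sym2.mem_mk_left u x₀
    exact huq (S8.mem_support_of_edge he hu_in)
  have hM_yv : s(y₀, v) ∉ M := by
    intro hmem
    obtain ⟨e, he, heM, hye⟩ := hqcov y₀ (Walk.end_mem_support q)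
    have h1 : e = s(y₀, v) :=
      S8.matching_eq hM.1.2 heM hmem hye (Sym2.mem_mk_left y₀ v)
    have hv_in : v ∈ e := h1 ▸ Sym2.mem_mk_right y₀ v
    exact hvq (S8.mem_support_of_edge he hv_in)
  have hrsupp : (q.concat hyv).support = q.support ++ [v] := by
    rw [Walk.support_concat]
  have hrpath : (q.concat hyv).IsPath := by
    apply Walk.IsPath.mk'
    rw [hrsupp]
    refine List.Nodup.append hqpath.support_nodup (List.nodup_singleton v) ?_
    intro w hw hw2
    rw [List.mem_singleton] at hw2
    subst hw2
    exact hvq hw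
  have hralt : S8.AltB M (q.concat hyv) true := by
    rw [Walk.concat_eq_append, S8.altB_append]
    refine ⟨hq_altB, ?_⟩
    have hd : decide (Odd q.length) = true := by simp [Nat.odd_iff, Nat.odd_iff.mp hqodd]
    rw [hd, Bool.true_xor, Bool.not_true]
    exact ⟨by simp [hM_yv], S8.altB_nil⟩
  have hpalt : S8.AltB M (Walk.cons hux (q.concat hyv)) false := ⟨by simp [hM_ux], hralt⟩
  have hplen : (Walk.cons hux (q.concat hyv)).length = q.length + 2 := by
    rw [Walk.length_cons, Walk.length_concat]
  have hpsupp : (Walk.cons hux (q.concat hyv)).support = u :: (q.support ++ [v]) := by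
    rw [Walk.support_cons, hrsupp]
  have hmem_p : ∀ z : V, z ∈ (Walk.cons hux (q.concat hyv)).support ↔
      (z = u ∨ z ∈ q.support ∨ z = v) := by
    intro z
    rw [hpsupp]
    simp [List.mem_cons, List.mem_append, List.mem_singleton]
  have hYmem : ∀ z : V,
      z ∈ (C ∪ {x' : V | x' ∈ (Walk.cons hux (q.concat hyv)).support}) \ {u, v} ↔
      ((z ∈ C ∨ z ∈ (Walk.cons hux (q.concat hyv)).support) ∧ z ≠ u ∧ z ≠ v) := by
    intro z
    simp [Set.mem_diff, Set.mem_union, Set.mem_insert_iff, Set.mem_singleton_iff, not_or]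
  obtain ⟨cc, hCc⟩ := hC
  have hCreach : ∀ z1 z2 : V, z1 ∈ C → z2 ∈ C →
      (allowedSubgraph G).Reachable z1 z2 := by
    intro z1 z2 h1 h2
    rw [hCc, SimpleGraph.ConnectedComponent.mem_supp_iff] at h1 h2
    exact (SimpleGraph.ConnectedComponent.eq).1 (h1.trans h2.symm)
  have hCclosed : ∀ z1 z2 : V, z1 ∈ C → (allowedSubgraph G).Reachable z1 z2 → z2 ∈ C := by
    intro z1 z2 h1 h2
    rw [hCc, SimpleGraph.ConnectedComponent.mem_supp_iff] at h1 ⊢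
    rw [← h1]
    exact (SimpleGraph.ConnectedComponent.eq).2 h2.symm
  have hCX' : ∀ z ∈ C, z ∉ X := fun z hz hzX => Set.disjoint_left.mp hCX hz hzX
  have hKM : ∀ z ∈ {z : V | z ∈ q.support ∧ z ∈ C}, ∀ w' : V, s(z, w') ∈ M →
      w' ∈ {z : V | z ∈ q.support ∧ z ∈ C} := by
    rintro z ⟨hzq, hzC⟩ w' hw'
    obtain ⟨e, he, heM, hze⟩ := hqcov z hzq
    have h1 : e = s(z, w') := S8.matching_eq hM.1.2 heM hw' hze (Sym2.mem_mk_left _ _)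
    have hw'q : w' ∈ q.support := S8.mem_support_of_edge he (h1 ▸ Sym2.mem_mk_right z w')
    have hadj : (allowedSubgraph G).Adj z w' := by
      rw [S8.allowedSubgraph_adj]
      exact ⟨(G.mem_edgeSet).1 (hM.1.1 hw'), S8.allowed_of_mem_pm hM hw'⟩
    exact ⟨hw'q, hCclosed z w' hzC hadj.reachable⟩
  have hw0nu : w0 ≠ u := fun h => hw0X (h ▸ huX)
  have hw0nv : w0 ≠ v := fun h => hw0X (h ▸ hvX)
  have hw0q : w0 ∈ q.support := by
    rcases (hmem_p w0).1 hw0p with h | h | h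
    · exact absurd h hw0nu
    · exact h
    · exact absurd h hw0nv
  obtain ⟨hxCp, hxu, hxv⟩ := (hYmem x).1 hxY
  have main : ∃ (y : V) (_ : y ∈ q.support) (Q : G.Walk x y), Q.IsPath ∧
      S8.AltB M Q true ∧ Even Q.length ∧
      (∀ z ∈ Q.support,
        z ∈ (C ∪ {x' : V | x' ∈ (Walk.cons hux (q.concat hyv)).support}) \ {u, v}) ∧
      (∀ z ∈ Q.support, z ∈ (Walk.cons hux (q.concat hyv)).support → z = y) := by
    by_cases hxq : x ∈ q.support
    · refine ⟨x, hxq, Walk.nil, Walk.IsPath.nil, S8.altB_nil, Even.zero, ?_, ?_⟩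
      · intro z hz
        rw [Walk.support_nil, List.mem_singleton] at hz
        subst hz
        exact hxY
      · intro z hz _
        rw [Walk.support_nil, List.mem_singleton] at hz
        exact hz
    · have hxC : x ∈ C := by
        rcases hxCp with h | h
        · exact h
        · rcases (hmem_p x).1 h with h1 | h1 | h1
          · exact absurd h1 hxu
          · exact absurd h1 hxq
          · exact absurd h1 hxv
      have hxw0 : x ≠ w0 := fun h => hxq (h ▸ hw0q)
      obtain ⟨R, hRp, hRe, hRa⟩ := S8.thmT (Fintype.card V) V G M hM (le_refl _) x w0 hxw0
        (hCreach x w0 hxC hw0C)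
      have hRC : ∀ z ∈ R.support, z ∈ C := fun z hz => hCclosed x z hxC
        (S8.reach_of_walk R
          (fun e he => S8.allowed_edge_mem (Walk.edges_subset_edgeSet R he) (hRe e he)) z hz)
      obtain ⟨y, Q, hQp, hQa, hQev, hyK, hQsub, hQfirst⟩ :=
        S8.trunc hM hKM R hRp hRa (fun h => hxq h.1) ⟨hw0q, hw0C⟩
      refine ⟨y, hyK.1, Q, hQp, hQa, hQev, ?_, ?_⟩
      · intro z hz
        have hzC : z ∈ C := hRC z (hQsub z hz)
        refine (hYmem z).2 ⟨Or.inl hzC, ?_, ?_⟩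
        · exact fun h => hCX' z hzC (h ▸ huX)
        · exact fun h => hCX' z hzC (h ▸ hvX)
      · intro z hz hzp
        have hzC : z ∈ C := hRC z (hQsub z hz)
        have hzq : z ∈ q.support := by
          rcases (hmem_p z).1 hzp with h | h | h
          · exact absurd (h ▸ huX) (hCX' z hzC)
          · exact h
          · exact absurd (h ▸ hvX) (hCX' z hzC)
        exact hQfirst z hz ⟨hzq, hzC⟩
  obtain ⟨y, hyq, Q, hQp, hQa, hQev, hQY, hQfp⟩ := main
  have hyu : y ≠ u := fun h => huq (h ▸ hyq)
  have hynv : y ≠ v := fun h => hvq (h ▸ hyq)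
  have hy : y ∈ (Walk.cons hux (q.concat hyv)).support :=
    (hmem_p y).2 (Or.inr (Or.inl hyq))
  have hyr : y ∈ (q.concat hyv).support := by
    rw [hrsupp]
    exact List.mem_append_left _ hyq
  have hney : u ≠ y := fun h => hyu h.symm
  have hTeq : (Walk.cons hux (q.concat hyv)).takeUntil y hy =
      Walk.cons hux ((q.concat hyv).takeUntil y hyr) :=
    S8.takeUntil_cons hux _ hy hney hyr
  have hDeq : (Walk.cons hux (q.concat hyv)).dropUntil y hy =
      (q.concat hyv).dropUntil y hyr :=
    S8.dropUntil_cons hux _ hy hney hyr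
  have hTDalt : S8.AltB M ((Walk.cons hux (q.concat hyv)).takeUntil y hy) false ∧
      S8.AltB M ((Walk.cons hux (q.concat hyv)).dropUntil y hy)
        (Bool.xor (decide (Odd ((Walk.cons hux (q.concat hyv)).takeUntil y hy).length))
          false) := by
    have h := S8.altB_append (M := M) ((Walk.cons hux (q.concat hyv)).takeUntil y hy)
      ((Walk.cons hux (q.concat hyv)).dropUntil y hy) false
    rw [Walk.take_spec] at h
    exact h.1 hpalt
  obtain ⟨hTalt, hDalt⟩ := hTDalt
  have hlen : ((Walk.cons hux (q.concat hyv)).takeUntil y hy).length +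
      ((Walk.cons hux (q.concat hyv)).dropUntil y hy).length = q.length + 2 := by
    have h := congrArg Walk.length (Walk.take_spec (Walk.cons hux (q.concat hyv)) hy)
    rw [Walk.length_append] at h
    rw [h, hplen]
  have hTr_path : ((q.concat hyv).takeUntil y hyr).IsPath := hrpath.takeUntil hyr
  have hDr_path : ((q.concat hyv).dropUntil y hyr).IsPath := hrpath.dropUntil hyr
  have hv_nTr : v ∉ ((q.concat hyv).takeUntil y hyr).support := by
    intro hmem
    have hsplit := Walk.take_spec (q.concat hyv) hyr
    have hnd := hrpath.support_nodup
    rw [← hsplit, Walk.support_append] at hnd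
    have hvD : v ∈ ((q.concat hyv).dropUntil y hyr).support := Walk.end_mem_support _
    have hvtail : v ∈ ((q.concat hyv).dropUntil y hyr).support.tail := by
      rw [Walk.support_eq_cons ((q.concat hyv).dropUntil y hyr), List.mem_cons] at hvD
      rcases hvD with h1 | h1
      · exact absurd h1.symm hynv
      · exact h1
    exact (List.disjoint_of_nodup_append hnd) hmem hvtail
  have hu_nTr : u ∉ ((q.concat hyv).takeUntil y hyr).support := by
    by_cases huv : u = v
    · rw [huv]
      exact hv_nTr
    · intro hmem
      have h2 := Walk.support_takeUntil_subset _ hyr hmem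
      rw [hrsupp] at h2
      rcases List.mem_append.mp h2 with h1 | h1
      · exact huq h1
      · rw [List.mem_singleton] at h1
        exact huv h1
  have hT_path : ((Walk.cons hux (q.concat hyv)).takeUntil y hy).IsPath := by
    rw [hTeq, Walk.cons_isPath_iff]
    exact ⟨hTr_path, hu_nTr⟩
  have hD_path : ((Walk.cons hux (q.concat hyv)).dropUntil y hy).IsPath := by
    rw [hDeq]
    exact hDr_path
  have hT_pos : 0 < ((Walk.cons hux (q.concat hyv)).takeUntil y hy).length :=
    S8.length_pos_of_ne _ hney
  refine ⟨y, hy, Q, hyu, hynv, S8.isBalanced_of hQp hQev hQa, hQY, hQfp, ?_⟩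
  rcases Nat.even_or_odd ((Walk.cons hux (q.concat hyv)).takeUntil y hy).length with
    hev | hodd
  · left
    have hTrev_alt :
        S8.AltB M ((Walk.cons hux (q.concat hyv)).takeUntil y hy).reverse true := by
      have h := S8.altB_reverse _ hTalt
      rw [decide_eq_true hev, Bool.true_xor, Bool.not_false] at h
      exact h
    have hdisj : ∀ w' ∈ Q.support,
        w' ∈ ((Walk.cons hux (q.concat hyv)).takeUntil y hy).reverse.support → w' = y := by
      intro w' hwQ hwT
      rw [Walk.support_reverse, List.mem_reverse] at hwT
      exact hQfp w' hwQ (Walk.support_takeUntil_subset _ hy hwT)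
    obtain ⟨happ_path, happ_alt⟩ :=
      S8.append_path_alt hQp hT_path.reverse hQa hQev hTrev_alt hdisj
    refine ⟨S8.isBalanced_of happ_path ?_ happ_alt, ?_⟩
    · rw [Walk.length_append, Walk.length_reverse]
      exact hQev.add hev
    · intro z hz hzu
      rw [Walk.support_append, List.mem_append] at hz
      rcases hz with hz | hz
      · exact hQY z hz
      · have hzT : z ∈ ((Walk.cons hux (q.concat hyv)).takeUntil y hy).support := by
          have h2 := List.mem_of_mem_tail hz
          rw [Walk.support_reverse, List.mem_reverse] at h2
          exact h2
        have hzp : z ∈ (Walk.cons hux (q.concat hyv)).support :=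
          Walk.support_takeUntil_subset _ hy hzT
        have hznv : z ≠ v := by
          intro h
          subst h
          rw [hTeq, Walk.support_cons, List.mem_cons] at hzT
          rcases hzT with h1 | h1
          · exact hzu h1
          · exact hv_nTr h1
        exact (hYmem z).2 ⟨Or.inr hzp, hzu, hznv⟩
  · right
    have hDalt' : S8.AltB M ((Walk.cons hux (q.concat hyv)).dropUntil y hy) true := by
      rw [decide_eq_true hodd, Bool.true_xor, Bool.not_false] at hDalt
      exact hDalt
    have hDev : Even ((Walk.cons hux (q.concat hyv)).dropUntil y hy).length := by
      rw [Nat.even_iff]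
      have h1 := Nat.odd_iff.mp hodd
      have h2 := Nat.odd_iff.mp hqodd
      omega
    have hdisj : ∀ w' ∈ Q.support,
        w' ∈ ((Walk.cons hux (q.concat hyv)).dropUntil y hy).support → w' = y := by
      intro w' hwQ hwD
      exact hQfp w' hwQ (Walk.support_dropUntil_subset _ hy hwD)
    obtain ⟨happ_path, happ_alt⟩ :=
      S8.append_path_alt hQp hD_path hQa hQev hDalt' hdisj
    refine ⟨S8.isBalanced_of happ_path ?_ happ_alt, ?_⟩
    · rw [Walk.length_append]
      exact hQev.add hDev
    · intro z hz hzv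
      rw [Walk.support_append, List.mem_append] at hz
      rcases hz with hz | hz
      · exact hQY z hz
      · have hzD : z ∈ ((Walk.cons hux (q.concat hyv)).dropUntil y hy).support :=
          List.mem_of_mem_tail hz
        have hzp : z ∈ (Walk.cons hux (q.concat hyv)).support :=
          Walk.support_dropUntil_subset _ hy hzD
        have hznu : z ≠ u := by
          by_cases huv : u = v
          · rw [huv]
            exact hzv
          · intro h
            subst h
            rw [hDeq] at hzD
            have h2 := Walk.support_dropUntil_subset _ hyr hzD
            rw [hrsupp] at h2
            rcases List.mem_append.mp h2 with h1 | h1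
            · exact huq h1
            · rw [List.mem_singleton] at h1
              exact huv h1
        exact (hYmem z).2 ⟨Or.inr hzp, hznu, hzv⟩
end

section
/- Let G be a factorizable finite simple graph and H a factor-component of G. Then the relation on V(H) defined by u ~ v if and only if u = v or G − u − v has no perfect matching is an equivalence relation on V(H). -/
open SimpleGraph

variable {V : Type*}

/-! ### Auxiliary development for statement 12 -/

section Aux12

open Classical

variable {G : SimpleGraph V}

/-- The set of vertices exposed (not covered) by an edge set `W`. -/
def mexp (W : Set (Sym2 V)) : Set V := {t | ∀ e ∈ W, t ∉ e}

lemma eq_of_shared {W : Set (Sym2 V)} (hW : DisjointEdges W) {e f : Sym2 V} {x : V}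
    (he : e ∈ W) (hf : f ∈ W) (hxe : x ∈ e) (hxf : x ∈ f) : e = f := by
  by_contra h
  exact hW e he f hf h x hxe hxf

lemma not_diag_of_mem {W : Set (Sym2 V)} (hW : IsMatchingSet G W) {a b : V}
    (h : s(a, b) ∈ W) : a ≠ b := by
  intro hab
  subst hab
  exact G.irrefl (hW.1 h)

lemma hasPMOn_pair_iff {a b : V} (hab : a ≠ b) :
    HasPMOn G (({a, b} : Set V)ᶜ) ↔ ∃ W, IsMatchingSet G W ∧ mexp W = {a, b} := by
  constructor
  · rintro ⟨M, hM, hin, hcov⟩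
    refine ⟨M, hM, ?_⟩
    ext t
    simp only [mexp, Set.mem_setOf_eq, Set.mem_insert_iff, Set.mem_singleton_iff]
    constructor
    · intro ht
      by_contra hne
      push_neg at hne
      have htX : t ∈ ({a, b} : Set V)ᶜ := by
        simp only [Set.mem_compl_iff, Set.mem_insert_iff, Set.mem_singleton_iff]
        tauto
      obtain ⟨e, he, hte⟩ := hcov t htX
      exact ht e he hte
    · intro ht e he hte
      have := hin e he t hte
      simp only [Set.mem_compl_iff, Set.mem_insert_iff, Set.mem_singleton_iff] at this
      tauto
  · rintro ⟨W, hW, hexp⟩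
    refine ⟨W, hW, ?_, ?_⟩
    · intro e he x hxe
      simp only [Set.mem_compl_iff, Set.mem_insert_iff, Set.mem_singleton_iff]
      intro hx
      have : x ∈ mexp W := by
        rw [hexp]
        simp only [Set.mem_insert_iff, Set.mem_singleton_iff]
        tauto
      exact this e he hxe
    · intro t htX
      by_contra hno
      push_neg at hno
      have : t ∈ mexp W := fun e he => hno e he
      rw [hexp] at this
      simp only [Set.mem_insert_iff, Set.mem_singleton_iff] at this
      simp only [Set.mem_compl_iff, Set.mem_insert_iff, Set.mem_singleton_iff] at htX
      tauto

lemma pm_mexp {M : Set (Sym2 V)} (hM : IsPerfectMatchingSet G M) : mexp M = ∅ := by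
  ext t
  simp only [mexp, Set.mem_setOf_eq, Set.mem_empty_iff_false, iff_false]
  push_neg
  exact hM.2 t

/-- Removing an edge from a matching. -/
lemma edit_remove {W : Set (Sym2 V)} (hW : IsMatchingSet G W) {a b : V}
    (h : s(a, b) ∈ W) :
    IsMatchingSet G (W \ {s(a, b)}) ∧ mexp (W \ {s(a, b)}) = mexp W ∪ {a, b} := by
  constructor
  · exact ⟨fun e he => hW.1 he.1,
      fun e he f hf hef x hxe => hW.2 e he.1 f hf.1 hef x hxe⟩
  · ext t
    simp only [mexp, Set.mem_setOf_eq, Set.mem_diff, Set.mem_singleton_iff, Set.mem_union,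
      Set.mem_insert_iff]
    constructor
    · intro ht
      by_cases htab : t = a ∨ t = b
      · tauto
      · left
        intro e he
        by_cases heab : e = s(a, b)
        · subst heab
          rw [Sym2.mem_iff]
          tauto
        · exact ht e ⟨he, heab⟩
    · intro ht e ⟨he, heab⟩ hte
      rcases ht with ht | ht | ht
      · exact ht e he hte
      · subst ht
        exact heab (eq_of_shared hW.2 he h hte (by simp))
      · subst ht
        exact heab (eq_of_shared hW.2 he h hte (by simp))

/-- Adding an edge between two exposed vertices of a matching. -/
lemma edit_add {W : Set (Sym2 V)} (hW : IsMatchingSet G W) {a b : V}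
    (hadj : G.Adj a b) (ha : a ∈ mexp W) (hb : b ∈ mexp W) :
    IsMatchingSet G (insert s(a, b) W) ∧
      mexp (insert s(a, b) W) = mexp W \ {a, b} := by
  constructor
  · constructor
    · intro e he
      rcases he with he | he
      · subst he; exact hadj
      · exact hW.1 he
    · intro e he f hf hef x hxe hxf
      rcases he with he | he <;> rcases hf with hf | hf
      · subst he; subst hf; exact hef rfl
      · subst he
        rw [Sym2.mem_iff] at hxe
        rcases hxe with rfl | rfl
        · exact ha f hf hxf
        · exact hb f hf hxf
      · subst hf
        rw [Sym2.mem_iff] at hxf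
        rcases hxf with rfl | rfl
        · exact ha e he hxe
        · exact hb e he hxe
      · exact hW.2 e he f hf hef x hxe hxf
  · ext t
    simp only [mexp, Set.mem_setOf_eq, Set.mem_insert_iff, Set.mem_diff, Sym2.mem_iff,
      Set.mem_singleton_iff]
    constructor
    · intro ht
      refine ⟨fun e he => ht e (Or.inr he), ?_⟩
      have := ht s(a, b) (Or.inl rfl)
      rw [Sym2.mem_iff] at this
      tauto
    · rintro ⟨ht, htab⟩ e he hte
      rcases he with rfl | he
      · rw [Sym2.mem_iff] at hte; tauto
      · exact ht e he hte

end Aux12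

section Aux12b

variable {G : SimpleGraph V}

/-- The symmetric difference of two edge sets. -/
def sdiff2 (Φ N : Set (Sym2 V)) : Set (Sym2 V) := (Φ ∪ N) \ (Φ ∩ N)

/-- The graph whose edges are the symmetric difference of two matchings. -/
def sdG (Φ N : Set (Sym2 V)) : SimpleGraph V where
  Adj a b := a ≠ b ∧ s(a, b) ∈ sdiff2 Φ N
  symm := by
    constructor
    rintro a b ⟨h1, h2⟩
    refine ⟨h1.symm, ?_⟩
    rwa [Sym2.eq_swap]
  loopless := ⟨fun a h => h.1 rfl⟩

/-- The set of vertices reachable from `v` in a graph. -/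
def reachSet (S : SimpleGraph V) (v : V) : Set V := {t | S.Reachable v t}

lemma reachSet_self (S : SimpleGraph V) (v : V) : v ∈ reachSet S v := Reachable.refl v

lemma reachSet_closed {S : SimpleGraph V} {v a b : V} (ha : a ∈ reachSet S v)
    (hab : S.Adj a b) : b ∈ reachSet S v :=
  Reachable.trans ha hab.reachable

/-- Edges of the symmetric difference meeting `K`. -/
def swapR (Φ N : Set (Sym2 V)) (K : Set V) : Set (Sym2 V) :=
  {e | e ∈ sdiff2 Φ N ∧ ∃ x, x ∈ e ∧ x ∈ K}

/-- The matching obtained from `Φ` by swapping with `N` on the edges meeting `K`. -/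
def swapped (Φ N : Set (Sym2 V)) (K : Set V) : Set (Sym2 V) :=
  (Φ \ swapR Φ N K) ∪ (N ∩ swapR Φ N K)

variable {Φ N : Set (Sym2 V)} {K : Set V}

lemma not_mexp_iff {W : Set (Sym2 V)} {t : V} : t ∉ mexp W ↔ ∃ e ∈ W, t ∈ e := by
  simp only [mexp, Set.mem_setOf_eq]
  push_neg
  rfl

lemma swapR_mem_of_mem {e : Sym2 V} {x : V} (hΦ : IsMatchingSet G Φ)
    (hN : IsMatchingSet G N)
    (hK : ∀ a b, a ∈ K → (sdG Φ N).Adj a b → b ∈ K)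
    (he : e ∈ swapR Φ N K) (hxe : x ∈ e) : x ∈ K := by
  obtain ⟨hesd, y, hye, hyK⟩ := he
  have heE : e ∈ G.edgeSet := by
    rcases hesd.1 with h | h
    · exact hΦ.1 h
    · exact hN.1 h
  induction e with
  | _ p q =>
    rw [Sym2.mem_iff] at hxe hye
    have hpq : p ≠ q := by
      intro h; subst h; exact G.irrefl heE
    have hadjpq : (sdG Φ N).Adj p q := (show p ≠ q ∧ s(p, q) ∈ sdiff2 Φ N from ⟨hpq, hesd⟩)
    have hboth : p ∈ K ∧ q ∈ K := by
      rcases hye with rfl | rfl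
      · exact ⟨hyK, hK _ _ hyK hadjpq⟩
      · exact ⟨hK _ _ hyK hadjpq.symm, hyK⟩
    rcases hxe with rfl | rfl
    · exact hboth.1
    · exact hboth.2

lemma swapped_isMatching (hΦ : IsMatchingSet G Φ) (hN : IsMatchingSet G N)
    (hK : ∀ a b, a ∈ K → (sdG Φ N).Adj a b → b ∈ K) :
    IsMatchingSet G (swapped Φ N K) := by
  constructor
  · intro e he
    rcases he with he | he
    · exact hΦ.1 he.1
    · exact hN.1 he.1
  · intro e he f hf hef x hxe hxf
    rcases he with he | he <;> rcases hf with hf | hf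
    · exact hΦ.2 e he.1 f hf.1 hef x hxe hxf
    · have hxK : x ∈ K := swapR_mem_of_mem hΦ hN hK hf.2 hxf
      by_cases heN : e ∈ N
      · exact hN.2 e heN f hf.1 hef x hxe hxf
      · have : e ∈ swapR Φ N K := ⟨⟨Or.inl he.1, fun hc => heN hc.2⟩, x, hxe, hxK⟩
        exact he.2 this
    · have hxK : x ∈ K := swapR_mem_of_mem hΦ hN hK he.2 hxe
      by_cases hfN : f ∈ N
      · exact hN.2 e he.1 f hfN hef x hxe hxf
      · have : f ∈ swapR Φ N K := ⟨⟨Or.inl hf.1, fun hc => hfN hc.2⟩, x, hxf, hxK⟩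
        exact hf.2 this
    · exact hN.2 e he.1 f hf.1 hef x hxe hxf

lemma swapped_cov (hΦ : IsMatchingSet G Φ) (hN : IsMatchingSet G N)
    (hK : ∀ a b, a ∈ K → (sdG Φ N).Adj a b → b ∈ K) (t : V) :
    (∃ e ∈ swapped Φ N K, t ∈ e) ↔
      ((t ∈ K ∧ ∃ e ∈ N, t ∈ e) ∨ (t ∉ K ∧ ∃ e ∈ Φ, t ∈ e)) := by
  constructor
  · rintro ⟨e, he, hte⟩
    rcases he with he | he
    · by_cases heN : e ∈ N
      · by_cases htK : t ∈ K
        · exact Or.inl ⟨htK, e, heN, hte⟩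
        · exact Or.inr ⟨htK, e, he.1, hte⟩
      · have htK : t ∉ K := by
          intro htK
          exact he.2 ⟨⟨Or.inl he.1, fun hc => heN hc.2⟩, t, hte, htK⟩
        exact Or.inr ⟨htK, e, he.1, hte⟩
    · have htK : t ∈ K := swapR_mem_of_mem hΦ hN hK he.2 hte
      exact Or.inl ⟨htK, e, he.1, hte⟩
  · rintro (⟨htK, e, he, hte⟩ | ⟨htK, e, he, hte⟩)
    · by_cases heΦ : e ∈ Φ
      · refine ⟨e, Or.inl ⟨heΦ, ?_⟩, hte⟩
        rintro ⟨hsd, -⟩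
        exact hsd.2 ⟨heΦ, he⟩
      · exact ⟨e, Or.inr ⟨he, ⟨⟨Or.inr he, fun hc => heΦ hc.1⟩, t, hte, htK⟩⟩, hte⟩
    · by_cases heN : e ∈ N
      · refine ⟨e, Or.inl ⟨he, ?_⟩, hte⟩
        rintro ⟨hsd, -⟩
        exact hsd.2 ⟨he, heN⟩
      · refine ⟨e, Or.inl ⟨he, ?_⟩, hte⟩
        rintro ⟨-, x, hxe, hxK⟩
        exact htK (swapR_mem_of_mem hΦ hN hK ⟨⟨Or.inl he, fun hc => heN hc.2⟩, x, hxe, hxK⟩ hte)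

lemma swapped_mexp (hΦ : IsMatchingSet G Φ) (hN : IsMatchingSet G N)
    (hK : ∀ a b, a ∈ K → (sdG Φ N).Adj a b → b ∈ K) :
    mexp (swapped Φ N K) = (mexp Φ \ K) ∪ (mexp N ∩ K) := by
  ext t
  have h := swapped_cov hΦ hN hK t
  have h1 : t ∈ mexp (swapped Φ N K) ↔ ¬ ∃ e ∈ swapped Φ N K, t ∈ e := not_not.symm.trans (not_congr not_mexp_iff)
  have h2 : t ∈ mexp N ↔ ¬ ∃ e ∈ N, t ∈ e := not_not.symm.trans (not_congr not_mexp_iff)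
  have h3 : t ∈ mexp Φ ↔ ¬ ∃ e ∈ Φ, t ∈ e := not_not.symm.trans (not_congr not_mexp_iff)
  simp only [Set.mem_union, Set.mem_diff, Set.mem_inter_iff]
  rw [h1, h2, h3, h]
  push_neg
  by_cases htK : t ∈ K
  · simp only [htK, not_true_eq_false, IsEmpty.forall_iff, and_true, true_implies,
      not_false_eq_true, forall_true_left]
    tauto
  · simp only [htK, not_false_eq_true, true_implies, IsEmpty.forall_iff, false_implies,
      true_and, and_false]
    tauto

end Aux12b

section Aux12c

variable {G : SimpleGraph V}

/-- The set of vertices covered by an edge set. -/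
def mcov (W : Set (Sym2 V)) : Set V := {t | ∃ e ∈ W, t ∈ e}

lemma mexp_compl (W : Set (Sym2 V)) : (mexp W)ᶜ = mcov W := by
  ext t
  simp only [Set.mem_compl_iff, mcov, Set.mem_setOf_eq]
  exact not_mexp_iff

lemma mcov_even [Fintype V] {W : Set (Sym2 V)} (hW : IsMatchingSet G W) :
    Even (mcov W).ncard := by
  have hfin : W.Finite := Set.toFinite W
  refine Set.Finite.induction_on (motive := fun W' _ => IsMatchingSet G W' → Even (mcov W').ncard)
    W hfin ?_ ?_ hW
  · intro _
    have : mcov (∅ : Set (Sym2 V)) = ∅ := by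
      ext t; simp [mcov]
    simp [this]
  · intro e W' heW' hfinW' ih hWi
    have hW' : IsMatchingSet G W' := by
      refine ⟨fun f hf => hWi.1 (Set.mem_insert_of_mem _ hf), ?_⟩
      intro f hf g hg hfg x hxf hxg
      exact hWi.2 f (Set.mem_insert_of_mem _ hf) g (Set.mem_insert_of_mem _ hg) hfg x hxf hxg
    have hcovins : mcov (insert e W') = {x | x ∈ e} ∪ mcov W' := by
      ext t
      simp only [mcov, Set.mem_setOf_eq, Set.mem_insert_iff, Set.mem_union]
      constructor
      · rintro ⟨f, (rfl | hf), htf⟩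
        · exact Or.inl htf
        · exact Or.inr ⟨f, hf, htf⟩
      · rintro (hte | ⟨f, hf, htf⟩)
        · exact ⟨e, Or.inl rfl, hte⟩
        · exact ⟨f, Or.inr hf, htf⟩
    have hdisj : Disjoint {x | x ∈ e} (mcov W') := by
      rw [Set.disjoint_left]
      rintro x hxe ⟨f, hf, hxf⟩
      have hef : e ≠ f := fun h => heW' (h ▸ hf)
      exact hWi.2 e (Set.mem_insert _ _) f (Set.mem_insert_of_mem _ hf) hef x hxe hxf
    have heE : e ∈ G.edgeSet := hWi.1 (Set.mem_insert _ _)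
    have hecard : ({x | x ∈ e} : Set V).ncard = 2 := by
      induction e with
      | _ p q =>
        have hpq : p ≠ q := by
          intro h; subst h; exact G.irrefl heE
        have : ({x | x ∈ s(p, q)} : Set V) = {p, q} := by
          ext t; simp [Sym2.mem_iff]
        rw [this, Set.ncard_pair hpq]
    rw [hcovins, Set.ncard_union_eq hdisj (Set.toFinite _) (Set.toFinite _), hecard]
    obtain ⟨k, hk⟩ := ih hW'
    exact ⟨k + 1, by omega⟩

lemma mexp_parity [Fintype V] {W : Set (Sym2 V)} (hW : IsMatchingSet G W) :
    (mexp W).ncard % 2 = Fintype.card V % 2 := by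
  have h1 : (mexp W).ncard + (mexp W)ᶜ.ncard = Fintype.card V := by
    rw [← Nat.card_eq_fintype_card]
    exact Set.ncard_add_ncard_compl _
  rw [mexp_compl] at h1
  obtain ⟨k, hk⟩ := mcov_even hW
  omega

lemma swap_parity [Fintype V] {Φ N : Set (Sym2 V)} {K : Set V}
    (hΦ : IsMatchingSet G Φ) (hN : IsMatchingSet G N)
    (hK : ∀ a b, a ∈ K → (sdG Φ N).Adj a b → b ∈ K) :
    Even ((mexp Φ ∩ K).ncard + (mexp N ∩ K).ncard) := by
  have hWm := swapped_isMatching hΦ hN hK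
  have hWe := swapped_mexp hΦ hN hK
  have h1 := mexp_parity hWm
  have h2 := mexp_parity hΦ
  rw [hWe] at h1
  have hd1 : Disjoint (mexp Φ \ K) (mexp N ∩ K) := by
    rw [Set.disjoint_left]
    rintro x ⟨hxΦ, hxK⟩ ⟨hxN, hxK'⟩
    exact hxK hxK'
  have hd2 : Disjoint (mexp Φ \ K) (mexp Φ ∩ K) := by
    rw [Set.disjoint_left]
    rintro x ⟨-, hxK⟩ ⟨-, hxK'⟩
    exact hxK hxK'
  have hu1 : ((mexp Φ \ K) ∪ (mexp N ∩ K)).ncard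
      = (mexp Φ \ K).ncard + (mexp N ∩ K).ncard :=
    Set.ncard_union_eq hd1 (Set.toFinite _) (Set.toFinite _)
  have hu2 : (mexp Φ).ncard = (mexp Φ \ K).ncard + (mexp Φ ∩ K).ncard := by
    rw [← Set.ncard_union_eq hd2 (Set.toFinite _) (Set.toFinite _)]
    congr 1
    ext x
    by_cases hxK : x ∈ K <;> simp [hxK]
  rw [hu1] at h1
  rw [hu2] at h2
  refine ⟨((mexp Φ ∩ K).ncard + (mexp N ∩ K).ncard) / 2, ?_⟩
  omega

end Aux12c

section Aux12d

/-- An internal vertex of a path has two distinct neighbours on the path. -/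
lemma int_two_nbrs {S : SimpleGraph V} {s t x : V} (p : S.Walk s t) (hp : p.IsPath)
    (hx : x ∈ p.support) (hxs : x ≠ s) (hxt : x ≠ t) :
    ∃ y z, y ≠ z ∧ y ∈ p.support ∧ z ∈ p.support ∧ S.Adj x y ∧ S.Adj x z := by
  induction p with
  | nil =>
    simp only [SimpleGraph.Walk.support_nil, List.mem_singleton] at hx
    exact absurd hx hxs
  | @cons a m b h q ih =>
    rw [SimpleGraph.Walk.support_cons, List.mem_cons] at hx
    rcases hx with rfl | hx
    · exact absurd rfl hxs
    · rw [SimpleGraph.Walk.cons_isPath_iff] at hp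
      by_cases hxm : x = m
      · subst hxm
        -- neighbours: a (via h) and the second vertex of q
        cases q with
        | nil => exact absurd rfl hxt
        | cons h' q' =>
          refine ⟨a, _, ?_, ?_, ?_, h.symm, h'⟩
          · rintro rfl
            exact hp.2 (by simp)
          · simp
          · simp
      · obtain ⟨y, z, hyz, hy, hz, hxy, hxz⟩ := ih hp.1 hx hxm hxt
        exact ⟨y, z, hyz, by simp [hy], by simp [hz], hxy, hxz⟩

lemma nbr_start {S : SimpleGraph V} {a b : V} (p : S.Walk a b) (hab : a ≠ b) :
    ∃ y ∈ p.support, S.Adj a y := by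
  cases p with
  | nil => exact absurd rfl hab
  | cons h q => exact ⟨_, by simp, h⟩

lemma first_hit {S : SimpleGraph V} {Y : Set V} {s t : V} (q : S.Walk s t)
    (hs : s ∉ Y) (ht : t ∈ Y) : ∃ d' d, d' ∉ Y ∧ d ∈ Y ∧ S.Adj d' d := by
  induction q with
  | nil => exact absurd ht hs
  | @cons a m b h q ih =>
    by_cases hm : m ∈ Y
    · exact ⟨a, m, hs, hm, h⟩
    · exact ih hm ht

/-- A connected graph with maximum degree two cannot have three leaves. -/
lemma three_leaves {S : SimpleGraph V} {a b c : V}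
    (hdeg : ∀ t x y z : V, S.Adj t x → S.Adj t y → S.Adj t z → x = y ∨ x = z ∨ y = z)
    (la : ∀ x y : V, S.Adj a x → S.Adj a y → x = y)
    (lb : ∀ x y : V, S.Adj b x → S.Adj b y → x = y)
    (lc : ∀ x y : V, S.Adj c x → S.Adj c y → x = y)
    (hab : a ≠ b) (hac : a ≠ c) (hbc : b ≠ c)
    (h1 : S.Reachable a b) (h2 : S.Reachable a c) : False := by
  classical
  obtain ⟨w⟩ := h1
  obtain ⟨w2⟩ := h2
  set p := w.bypass with hpdef
  have hp : p.IsPath := SimpleGraph.Walk.bypass_isPath w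
  have hcY : c ∉ p.support := by
    intro hcY
    obtain ⟨y, z, hyz, -, -, hcy, hcz⟩ := int_two_nbrs p hp hcY hac.symm hbc.symm
    exact hyz (lc y z hcy hcz)
  obtain ⟨d', d, hd', hd, hadj⟩ :=
    first_hit (Y := {x | x ∈ p.support}) w2.reverse hcY (p.start_mem_support)
  by_cases hda : d = a
  · subst hda
    obtain ⟨y, hy, hay⟩ := nbr_start p hab
    have := la y d' hay hadj.symm
    subst this
    exact hd' hy
  · by_cases hdb : d = b
    · subst hdb
      obtain ⟨y, hy, hby⟩ := nbr_start p.reverse hab.symm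
      rw [SimpleGraph.Walk.support_reverse, List.mem_reverse] at hy
      have := lb y d' hby hadj.symm
      subst this
      exact hd' hy
    · obtain ⟨y, z, hyz, hy, hz, hdy, hdz⟩ := int_two_nbrs p hp hd hda hdb
      rcases hdeg d y z d' hdy hdz hadj.symm with h | h | h
      · exact hyz h
      · exact hd' (h ▸ hy)
      · exact hd' (h ▸ hz)

variable {G : SimpleGraph V}

/-- Bounded degree for the symmetric-difference graph of two matchings. -/
lemma sdG_hdeg {Φ N : Set (Sym2 V)} (hΦ : DisjointEdges Φ) (hN : DisjointEdges N) :
    ∀ t x y z : V, (sdG Φ N).Adj t x → (sdG Φ N).Adj t y → (sdG Φ N).Adj t z →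
      x = y ∨ x = z ∨ y = z := by
  intro t x y z hx hy hz
  have key : ∀ u v : V, s(t, u) ∈ Φ → s(t, v) ∈ Φ → u = v := by
    intro u v h1 h2
    have := eq_of_shared hΦ h1 h2 (Sym2.mem_mk_left t u) (Sym2.mem_mk_left t v)
    rwa [Sym2.congr_right] at this
  have keyN : ∀ u v : V, s(t, u) ∈ N → s(t, v) ∈ N → u = v := by
    intro u v h1 h2
    have := eq_of_shared hN h1 h2 (Sym2.mem_mk_left t u) (Sym2.mem_mk_left t v)
    rwa [Sym2.congr_right] at this
  rcases (show t ≠ x ∧ s(t, x) ∈ sdiff2 Φ N from hx).2.1 with hxm | hxm <;> rcases (show t ≠ y ∧ s(t, y) ∈ sdiff2 Φ N from hy).2.1 with hym | hym <;>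
    rcases (show t ≠ z ∧ s(t, z) ∈ sdiff2 Φ N from hz).2.1 with hzm | hzm
  · exact Or.inl (key _ _ hxm hym)
  · exact Or.inl (key _ _ hxm hym)
  · exact Or.inr (Or.inl (key _ _ hxm hzm))
  · exact Or.inr (Or.inr (keyN _ _ hym hzm))
  · exact Or.inr (Or.inr (key _ _ hym hzm))
  · exact Or.inr (Or.inl (keyN _ _ hxm hzm))
  · exact Or.inl (keyN _ _ hxm hym)
  · exact Or.inl (keyN _ _ hxm hym)

/-- A vertex exposed in `N` is a leaf of the symmetric-difference graph. -/
lemma sdG_leaf_right {Φ N : Set (Sym2 V)} (hΦ : DisjointEdges Φ) {t : V}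
    (ht : t ∈ mexp N) :
    ∀ x y : V, (sdG Φ N).Adj t x → (sdG Φ N).Adj t y → x = y := by
  intro x y hx hy
  have hxΦ : s(t, x) ∈ Φ := by
    rcases (show t ≠ x ∧ s(t, x) ∈ sdiff2 Φ N from hx).2.1 with h | h
    · exact h
    · exact absurd (Sym2.mem_mk_left t x) (ht _ h)
  have hyΦ : s(t, y) ∈ Φ := by
    rcases (show t ≠ y ∧ s(t, y) ∈ sdiff2 Φ N from hy).2.1 with h | h
    · exact h
    · exact absurd (Sym2.mem_mk_left t y) (ht _ h)
  have := eq_of_shared hΦ hxΦ hyΦ (Sym2.mem_mk_left t x) (Sym2.mem_mk_left t y)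
  rwa [Sym2.congr_right] at this

/-- A vertex exposed in `Φ` is a leaf of the symmetric-difference graph. -/
lemma sdG_leaf_left {Φ N : Set (Sym2 V)} (hN : DisjointEdges N) {t : V}
    (ht : t ∈ mexp Φ) :
    ∀ x y : V, (sdG Φ N).Adj t x → (sdG Φ N).Adj t y → x = y := by
  intro x y hx hy
  have hxN : s(t, x) ∈ N := by
    rcases (show t ≠ x ∧ s(t, x) ∈ sdiff2 Φ N from hx).2.1 with h | h
    · exact absurd (Sym2.mem_mk_left t x) (ht _ h)
    · exact h
  have hyN : s(t, y) ∈ N := by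
    rcases (show t ≠ y ∧ s(t, y) ∈ sdiff2 Φ N from hy).2.1 with h | h
    · exact absurd (Sym2.mem_mk_left t y) (ht _ h)
    · exact h
  have := eq_of_shared hN hxN hyN (Sym2.mem_mk_left t x) (Sym2.mem_mk_left t y)
  rwa [Sym2.congr_right] at this

end Aux12d

section Aux12e

variable {K : Set V} {a b : V}

lemma pair_diff_ff (ha : a ∉ K) (hb : b ∉ K) : ({a, b} : Set V) \ K = {a, b} := by
  ext t
  simp only [Set.mem_diff, Set.mem_insert_iff, Set.mem_singleton_iff]
  constructor
  · rintro ⟨h, -⟩; exact h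
  · rintro (rfl | rfl)
    · exact ⟨Or.inl rfl, ha⟩
    · exact ⟨Or.inr rfl, hb⟩

lemma pair_diff_tf (ha : a ∈ K) (hb : b ∉ K) : ({a, b} : Set V) \ K = {b} := by
  ext t
  simp only [Set.mem_diff, Set.mem_insert_iff, Set.mem_singleton_iff]
  constructor
  · rintro ⟨rfl | rfl, h2⟩
    · exact absurd ha h2
    · rfl
  · rintro rfl
    exact ⟨Or.inr rfl, hb⟩

lemma pair_diff_ft (ha : a ∉ K) (hb : b ∈ K) : ({a, b} : Set V) \ K = {a} := by
  ext t
  simp only [Set.mem_diff, Set.mem_insert_iff, Set.mem_singleton_iff]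
  constructor
  · rintro ⟨rfl | rfl, h2⟩
    · rfl
    · exact absurd hb h2
  · rintro rfl
    exact ⟨Or.inl rfl, ha⟩

lemma pair_inter_tt (ha : a ∈ K) (hb : b ∈ K) : ({a, b} : Set V) ∩ K = {a, b} :=
  Set.inter_eq_left.mpr (by
    rintro t (rfl | rfl)
    · exact ha
    · exact hb)

lemma pair_inter_tf (ha : a ∈ K) (hb : b ∉ K) : ({a, b} : Set V) ∩ K = {a} := by
  ext t
  simp only [Set.mem_inter_iff, Set.mem_insert_iff, Set.mem_singleton_iff]
  constructor
  · rintro ⟨rfl | rfl, h2⟩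
    · rfl
    · exact absurd h2 hb
  · rintro rfl
    exact ⟨Or.inl rfl, ha⟩

lemma pair_inter_ft (ha : a ∉ K) (hb : b ∈ K) : ({a, b} : Set V) ∩ K = {b} := by
  ext t
  simp only [Set.mem_inter_iff, Set.mem_insert_iff, Set.mem_singleton_iff]
  constructor
  · rintro ⟨rfl | rfl, h2⟩
    · exact absurd h2 ha
    · rfl
  · rintro rfl
    exact ⟨Or.inr rfl, hb⟩

lemma pair_inter_ff (ha : a ∉ K) (hb : b ∉ K) : ({a, b} : Set V) ∩ K = ∅ := by
  ext t
  simp only [Set.mem_inter_iff, Set.mem_insert_iff, Set.mem_singleton_iff,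
    Set.mem_empty_iff_false, iff_false, not_and]
  rintro (rfl | rfl)
  · exact ha
  · exact hb

lemma quad_diff {a b c d : V} (h1 : a ≠ b) (h2 : a ≠ d) (h3 : c ≠ b) (h4 : c ≠ d) :
    ((({a, b} : Set V) ∪ {c, d}) \ {b, d}) = {a, c} := by
  ext t
  simp only [Set.mem_diff, Set.mem_union, Set.mem_insert_iff, Set.mem_singleton_iff]
  constructor
  · rintro ⟨h, h2'⟩
    have hy : t ≠ b := fun h' => h2' (Or.inl h')
    have hz : t ≠ d := fun h' => h2' (Or.inr h')
    rcases h with (rfl | rfl) | (rfl | rfl)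
    · exact Or.inl rfl
    · exact absurd rfl hy
    · exact Or.inr rfl
    · exact absurd rfl hz
  · rintro (rfl | rfl)
    · exact ⟨Or.inl (Or.inl rfl), by rintro (h | h) <;> [exact h1 h; exact h2 h]⟩
    · exact ⟨Or.inr (Or.inl rfl), by rintro (h | h) <;> [exact h3 h; exact h4 h]⟩

end Aux12e


section Aux12f

variable {G : SimpleGraph V}

/-- The key surgery step. -/
lemma stepA [Fintype V] {v z x y : V} {M N : Set (Sym2 V)}
    (hM : IsMatchingSet G M) (hMe : mexp M = ∅)
    (hN : IsMatchingSet G N) (hNe : mexp N = {v, z})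
    (hxyM : s(x, y) ∈ M) (hyz : G.Adj y z)
    (hvx : v ≠ x) (hvy : v ≠ y) (hvz : v ≠ z) (hzx : z ≠ x) (hzy : z ≠ y)
    (hxy : x ≠ y) :
    (∃ W, IsMatchingSet G W ∧ mexp W = {v, x}) ∨
    (∃ W, IsMatchingSet G W ∧ mexp W = {v, y}) := by
  classical
  have finish : ∀ W₁ : Set (Sym2 V), IsMatchingSet G W₁ → s(x, y) ∈ W₁ →
      mexp W₁ = {v, z} → ∃ W, IsMatchingSet G W ∧ mexp W = {v, x} := by
    intro W₁ hW₁ hxyW₁ hW₁e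
    obtain ⟨hm1, he1⟩ := edit_remove hW₁ hxyW₁
    rw [hW₁e] at he1
    have hy1 : y ∈ mexp (W₁ \ {s(x, y)}) := by rw [he1]; simp
    have hz1 : z ∈ mexp (W₁ \ {s(x, y)}) := by rw [he1]; simp
    obtain ⟨hm2, he2⟩ := edit_add hm1 hyz hy1 hz1
    rw [he1] at he2
    refine ⟨_, hm2, ?_⟩
    rw [he2, Set.pair_comm y z, quad_diff hvz hvy hzx.symm hxy]
  by_cases hxyN : s(x, y) ∈ N
  · exact Or.inl (finish N hN hxyN hNe)
  · have hK : ∀ a b, a ∈ reachSet (sdG N M) x → (sdG N M).Adj a b →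
        b ∈ reachSet (sdG N M) x := fun a b ha hab => reachSet_closed ha hab
    have hpar := swap_parity hN hM hK
    rw [hNe, hMe, Set.empty_inter, Set.ncard_empty, Nat.add_zero] at hpar
    by_cases hvK : v ∈ reachSet (sdG N M) x <;> by_cases hzK : z ∈ reachSet (sdG N M) x
    · -- stage 2 : both v and z lie in the component of x
      obtain ⟨hM₁m, hM₁e⟩ := edit_remove hM hxyM
      rw [hMe, Set.empty_union] at hM₁e
      have hK₁ : ∀ a b, a ∈ reachSet (sdG (M \ {s(x, y)}) N) v →
          (sdG (M \ {s(x, y)}) N).Adj a b → b ∈ reachSet (sdG (M \ {s(x, y)}) N) v :=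
        fun a b ha hab => reachSet_closed ha hab
      have hvK₁ : v ∈ reachSet (sdG (M \ {s(x, y)}) N) v := reachSet_self _ _
      have hpar2 := swap_parity hM₁m hN hK₁
      rw [hM₁e, hNe] at hpar2
      have hWm := swapped_isMatching hM₁m hN hK₁
      have hWe := swapped_mexp hM₁m hN hK₁
      rw [hM₁e, hNe] at hWe
      by_cases hxK1 : x ∈ reachSet (sdG (M \ {s(x, y)}) N) v <;>
        by_cases hyK1 : y ∈ reachSet (sdG (M \ {s(x, y)}) N) v <;>
        by_cases hzK1 : z ∈ reachSet (sdG (M \ {s(x, y)}) N) v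
      · -- x, y, z all in K₁ : impossible (three leaves)
        exact absurd (three_leaves (sdG_hdeg hM₁m.2 hN.2)
          (sdG_leaf_right hM₁m.2 (by rw [hNe]; exact Or.inl rfl))
          (sdG_leaf_left hN.2 (by rw [hM₁e]; exact Or.inl rfl))
          (sdG_leaf_left hN.2 (by rw [hM₁e]; exact Or.inr rfl))
          hvx hvy hxy hxK1 hyK1) (fun h => h)
      · -- x, y in K₁, z not : parity contradiction
        rw [pair_inter_tt hxK1 hyK1, pair_inter_tf hvK₁ hzK1, Set.ncard_pair hxy,
          Set.ncard_singleton] at hpar2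
        rw [Nat.even_iff] at hpar2
        omega
      · -- x in, y out, z in : parity contradiction
        rw [pair_inter_tf hxK1 hyK1, pair_inter_tt hvK₁ hzK1, Set.ncard_pair hvz,
          Set.ncard_singleton] at hpar2
        rw [Nat.even_iff] at hpar2
        omega
      · -- x in, y out, z out : exposure {v, y}
        rw [pair_diff_tf hxK1 hyK1, pair_inter_tf hvK₁ hzK1, Set.singleton_union] at hWe
        right
        exact ⟨_, hWm, by rw [hWe, Set.pair_comm]⟩
      · -- x out, y in, z in : parity contradiction
        rw [pair_inter_ft hxK1 hyK1, pair_inter_tt hvK₁ hzK1, Set.ncard_pair hvz,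
          Set.ncard_singleton] at hpar2
        rw [Nat.even_iff] at hpar2
        omega
      · -- x out, y in, z out : exposure {v, x}
        rw [pair_diff_ft hxK1 hyK1, pair_inter_tf hvK₁ hzK1, Set.singleton_union] at hWe
        left
        exact ⟨_, hWm, by rw [hWe, Set.pair_comm]⟩
      · -- x out, y out, z in : exposure {x,y} ∪ {v,z}, then add yz
        rw [pair_diff_ff hxK1 hyK1, pair_inter_tt hvK₁ hzK1] at hWe
        have hy2 : y ∈ mexp (swapped (M \ {s(x, y)}) N (reachSet (sdG (M \ {s(x, y)}) N) v)) := by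
          rw [hWe]; simp
        have hz2 : z ∈ mexp (swapped (M \ {s(x, y)}) N (reachSet (sdG (M \ {s(x, y)}) N) v)) := by
          rw [hWe]; simp
        obtain ⟨hm3, he3⟩ := edit_add hWm hyz hy2 hz2
        rw [hWe] at he3
        left
        refine ⟨_, hm3, ?_⟩
        rw [he3, quad_diff hxy hzx.symm hvy hvz, Set.pair_comm]
      · -- x, y, z all out : parity contradiction
        rw [pair_inter_ff hxK1 hyK1, pair_inter_tf hvK₁ hzK1, Set.ncard_empty,
          Set.ncard_singleton] at hpar2
        rw [Nat.even_iff] at hpar2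
        omega
    · rw [pair_inter_tf hvK hzK, Set.ncard_singleton] at hpar
      rw [Nat.even_iff] at hpar
      omega
    · rw [pair_inter_ft hvK hzK, Set.ncard_singleton] at hpar
      rw [Nat.even_iff] at hpar
      omega
    · -- neither v nor z in the component of x : swap the component, then finish
      have hWm := swapped_isMatching hN hM hK
      have hWe := swapped_mexp hN hM hK
      rw [hNe, hMe, pair_diff_ff hvK hzK, Set.empty_inter, Set.union_empty] at hWe
      have hxyW : s(x, y) ∈ swapped N M (reachSet (sdG N M) x) := by
        right
        exact ⟨hxyM, ⟨⟨Or.inr hxyM, fun hc => hxyN hc.1⟩, x, Sym2.mem_mk_left x y,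
          reachSet_self _ _⟩⟩
      exact Or.inl (finish _ hWm hxyW hWe)

end Aux12f

section Aux12g

variable {G : SimpleGraph V}

/-- The final pairing analysis. -/
lemma finalB [Fintype V] {u v w z : V} {Φ N : Set (Sym2 V)}
    (hΦ : IsMatchingSet G Φ) (hΦe : mexp Φ = {u, w})
    (hN : IsMatchingSet G N) (hNe : mexp N = {v, z})
    (huz : G.Adj u z)
    (huv : u ≠ v) (huw : u ≠ w) (hvw : v ≠ w) (hzu : z ≠ u) (hzv : z ≠ v)
    (hzw : z ≠ w) :
    (∃ W, IsMatchingSet G W ∧ mexp W = {v, w}) ∨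
    (∃ W, IsMatchingSet G W ∧ mexp W = {u, v}) := by
  classical
  have hK : ∀ a b, a ∈ reachSet (sdG Φ N) v → (sdG Φ N).Adj a b →
      b ∈ reachSet (sdG Φ N) v := fun a b ha hab => reachSet_closed ha hab
  have hvK : v ∈ reachSet (sdG Φ N) v := reachSet_self _ _
  have hpar := swap_parity hΦ hN hK
  rw [hΦe, hNe] at hpar
  have hWm := swapped_isMatching hΦ hN hK
  have hWe := swapped_mexp hΦ hN hK
  rw [hΦe, hNe] at hWe
  by_cases huK : u ∈ reachSet (sdG Φ N) v <;>
    by_cases hwK : w ∈ reachSet (sdG Φ N) v <;>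
    by_cases hzK : z ∈ reachSet (sdG Φ N) v
  · -- u, w, z all in K : impossible (three leaves v, u, w)
    exact absurd (three_leaves (sdG_hdeg hΦ.2 hN.2)
      (sdG_leaf_right hΦ.2 (by rw [hNe]; exact Or.inl rfl))
      (sdG_leaf_left hN.2 (by rw [hΦe]; exact Or.inl rfl))
      (sdG_leaf_left hN.2 (by rw [hΦe]; exact Or.inr rfl))
      huv.symm hvw huw huK hwK) (fun h => h)
  · -- u, w in, z out : parity contradiction
    rw [pair_inter_tt huK hwK, pair_inter_tf hvK hzK, Set.ncard_pair huw,
      Set.ncard_singleton, Nat.even_iff] at hpar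
    omega
  · -- u in, w out, z in : parity contradiction
    rw [pair_inter_tf huK hwK, pair_inter_tt hvK hzK, Set.ncard_pair hzv.symm,
      Set.ncard_singleton, Nat.even_iff] at hpar
    omega
  · -- u in, w out, z out : exposure {w} ∪ {v} = {v, w}
    rw [pair_diff_tf huK hwK, pair_inter_tf hvK hzK, Set.singleton_union] at hWe
    left
    exact ⟨_, hWm, by rw [hWe, Set.pair_comm]⟩
  · -- u out, w in, z in : parity contradiction
    rw [pair_inter_ft huK hwK, pair_inter_tt hvK hzK, Set.ncard_pair hzv.symm,
      Set.ncard_singleton, Nat.even_iff] at hpar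
    omega
  · -- u out, w in, z out : exposure {u} ∪ {v} = {u, v}
    rw [pair_diff_ft huK hwK, pair_inter_tf hvK hzK, Set.singleton_union] at hWe
    right
    exact ⟨_, hWm, by rw [hWe]⟩
  · -- u out, w out, z in : exposure {u, w} ∪ {v, z}, add the edge uz
    rw [pair_diff_ff huK hwK, pair_inter_tt hvK hzK] at hWe
    have hu2 : u ∈ mexp (swapped Φ N (reachSet (sdG Φ N) v)) := by rw [hWe]; simp
    have hz2 : z ∈ mexp (swapped Φ N (reachSet (sdG Φ N) v)) := by rw [hWe]; simp
    obtain ⟨hm3, he3⟩ := edit_add hWm huz hu2 hz2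
    rw [hWe] at he3
    left
    refine ⟨_, hm3, ?_⟩
    rw [he3, Set.pair_comm u w, quad_diff huw.symm hzw.symm huv.symm hzv.symm,
      Set.pair_comm]
  · -- u, w, z all out : parity contradiction
    rw [pair_inter_ff huK hwK, pair_inter_tf hvK hzK, Set.ncard_empty,
      Set.ncard_singleton, Nat.even_iff] at hpar
    omega

/-- Every vertex in the factor-component of `v` other than `v` either forms a
deletable pair with `v`, or has a neighbour forming a deletable pair with `v`. -/
lemma lemY [Fintype V] {v x : V} (p : (allowedSubgraph G).Walk x v) (hxv : x ≠ v) :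
    HasPMOn G (({v, x} : Set V)ᶜ) ∨
      ∃ zz, zz ≠ v ∧ HasPMOn G (({v, zz} : Set V)ᶜ) ∧ G.Adj x zz := by
  classical
  revert hxv
  induction p with
  | nil => exact fun h => absurd rfl h
  | @cons a m b hadj q ih =>
    intro hxv
    obtain ⟨hGam, M, hMpm, hamM⟩ : G.Adj a m ∧ ∃ M, IsPerfectMatchingSet G M ∧ s(a, m) ∈ M :=
      hadj
    have hMe : mexp M = ∅ := pm_mexp hMpm
    by_cases hmv : m = b
    · -- the allowed edge goes directly to v
      subst hmv
      obtain ⟨hm1, he1⟩ := edit_remove hMpm.1 hamM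
      rw [hMe, Set.empty_union] at he1
      left
      exact (hasPMOn_pair_iff hxv.symm).mpr ⟨_, hm1, by rw [he1, Set.pair_comm]⟩
    · rcases ih hmv with hPM | ⟨zz, hzzv, hPMz, hAdjmzz⟩
      · exact Or.inr ⟨m, hmv, hPM, hGam⟩
      · by_cases hzza : zz = a
        · subst hzza
          exact Or.inl hPMz
        · obtain ⟨N, hNm, hNe⟩ := (hasPMOn_pair_iff (fun h => hzzv h.symm)).mp hPMz
          have hres := stepA (G := G) hMpm.1 hMe hNm hNe hamM hAdjmzz
            hxv.symm (fun h => hmv h.symm) (fun h => hzzv h.symm) hzza hAdjmzz.ne'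
            hGam.ne
          rcases hres with ⟨W, hWm, hWe⟩ | ⟨W, hWm, hWe⟩
          · exact Or.inl ((hasPMOn_pair_iff hxv.symm).mpr ⟨W, hWm, hWe⟩)
          · exact Or.inr ⟨m, hmv, (hasPMOn_pair_iff (fun h => hmv h.symm)).mpr
              ⟨W, hWm, hWe⟩, hGam⟩

end Aux12g

/-- Let `G` be a factorizable finite simple graph and `H` a
factor-component of `G`. The relation `u ∼ v` iff `u = v` or `G − u − v` has no perfect
matching is an equivalence relation on `V(H)`. -/
theorem statement_12 {V : Type*} [Fintype V] (G : SimpleGraph V) (hG : Factorizable G)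
    (C : Set V) (hC : IsFactorComponent G C) :
    (∀ u ∈ C, SimRel G u u) ∧
    (∀ u ∈ C, ∀ v ∈ C, SimRel G u v → SimRel G v u) ∧
    (∀ u ∈ C, ∀ v ∈ C, ∀ w ∈ C, SimRel G u v → SimRel G v w → SimRel G u w) := by
  classical
  obtain ⟨c, hc⟩ := hC
  have hreach : ∀ a ∈ C, ∀ b ∈ C, (allowedSubgraph G).Reachable a b := by
    intro a ha b hb
    rw [hc, SimpleGraph.ConnectedComponent.mem_supp_iff] at ha hb
    exact SimpleGraph.ConnectedComponent.exact (ha.trans hb.symm)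
  refine ⟨?_, ?_, ?_⟩
  · intro u _
    exact Or.inl rfl
  · intro u _ v _ h
    rcases h with rfl | h
    · exact Or.inl rfl
    · exact Or.inr (by rwa [Set.pair_comm])
  · intro u hu v hv w hw huv hvw
    by_cases huw : u = w
    · exact Or.inl huw
    by_cases huv' : u = v
    · subst huv'
      exact hvw
    by_cases hvw' : v = w
    · subst hvw'
      exact huv
    have hPuv : ¬ HasPMOn G (({u, v} : Set V)ᶜ) := by
      rcases huv with h | h
      · exact absurd h huv'
      · exact h
    have hPvw : ¬ HasPMOn G (({v, w} : Set V)ᶜ) := by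
      rcases hvw with h | h
      · exact absurd h hvw'
      · exact h
    refine Or.inr (fun hPuw => ?_)
    obtain ⟨Φ, hΦm, hΦe⟩ := (hasPMOn_pair_iff huw).mp hPuw
    obtain ⟨pw⟩ := hreach u hu v hv
    rcases lemY pw huv' with hD | ⟨z, hzv, hPMz, hAdjuz⟩
    · exact hPuv (by rwa [Set.pair_comm] at hD)
    · by_cases hzw : z = w
      · subst hzw
        exact hPvw hPMz
      · obtain ⟨N, hNm, hNe⟩ := (hasPMOn_pair_iff (fun h => hzv h.symm)).mp hPMz
        rcases finalB hΦm hΦe hNm hNe hAdjuz huv' huw hvw' hAdjuz.ne' hzv hzw with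
          ⟨W, hWm, hWe⟩ | ⟨W, hWm, hWe⟩
        · exact hPvw ((hasPMOn_pair_iff hvw').mpr ⟨W, hWm, hWe⟩)
        · exact hPuv ((hasPMOn_pair_iff huv').mpr ⟨W, hWm, hWe⟩)
end
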